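/- arXiv:0905.3460 — 3 statements merged into one kernel-verified Lean document; each statement's English description precedes it below -/
import Mathlib

section
/- Let (u_θ)_{θ∈I} be a smooth family of model eigenfunctions of H(θ) with eigenvalues σ(θ). Then for every θ ∈ I: ∫_{ℝ²₊} t V_θ u_θ² ds dt = C(θ)/2 and ∫_{ℝ²₊} s V_θ u_θ² ds dt = −S(θ)/2, where C(θ) = cos θ · σ(θ) − sin θ · σ'(θ) and S(θ) = sin θ · σ(θ) + cos θ · σ'(θ). -/
open Real MeasureTheory Set
open Filter Topology

noncomputable section

/-- Partial derivative with respect to the first variable. -/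
def pd1 (u : ℝ → ℝ → ℝ) : ℝ → ℝ → ℝ := fun s t => deriv (fun x => u x t) s

/-- Partial derivative with respect to the second variable. -/
def pd2 (u : ℝ → ℝ → ℝ) : ℝ → ℝ → ℝ := fun s t => deriv (fun y => u s y) t

/-- The potential `V_θ(s,t) = t cos θ − s sin θ`. -/
def Vpot (θ : ℝ) : ℝ → ℝ → ℝ := fun s t => t * Real.cos θ - s * Real.sin θ

/-- The operator `H(θ) = −∂_s² − ∂_t² + V_θ²` applied to `u`. -/
def Hop (θ : ℝ) (u : ℝ → ℝ → ℝ) : ℝ → ℝ → ℝ :=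
  fun s t => - pd1 (pd1 u) s t - pd2 (pd2 u) s t + (Vpot θ s t)^2 * u s t

/-- Integral over the half-plane `{t > 0}` with respect to `ds dt`. -/
def intHalf (f : ℝ → ℝ → ℝ) : ℝ := ∫ s : ℝ, ∫ t in Set.Ioi (0:ℝ), f s t

/-- Schwartz-class on the closed half-plane: all iterated partial derivatives decay
faster than any power of `|s| + t`. -/
def SchwartzHalf (u : ℝ → ℝ → ℝ) : Prop :=
  ∀ k l n : ℕ, ∃ C : ℝ, ∀ s t : ℝ, 0 ≤ t →
    |pd1^[k] (pd2^[l] u) s t| ≤ C * (1 + |s| + t) ^ (-(n:ℝ))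

/-- A model eigenfunction of `H(θ)` with eigenvalue `σ`: smooth up to the boundary,
Schwartz-class, `L²`-normalized, Neumann boundary condition, and `H(θ)u = σu` on `{t ≥ 0}`. -/
structure IsModelEigen (θ : ℝ) (u : ℝ → ℝ → ℝ) (σ : ℝ) : Prop where
  smooth : ∀ n : ℕ, ContDiff ℝ n (fun p : ℝ × ℝ => u p.1 p.2)
  schwartz : SchwartzHalf u
  normalized : intHalf (fun s t => (u s t)^2) = 1
  neumann : ∀ s : ℝ, pd2 u s 0 = 0
  eigen : ∀ s t : ℝ, 0 ≤ t → Hop θ u s t = σ * u s t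

/-- Partial derivative in the parameter `θ` of a family. -/
def pdθ (u : ℝ → ℝ → ℝ → ℝ) : ℝ → ℝ → ℝ → ℝ := fun θ s t => deriv (fun x => u x s t) θ

/-- A smooth family of model eigenfunctions of `H(θ)` with eigenvalues `σ(θ)`,
parametrized by the open interval `Ioo a b ⊆ (0, π/2)`: the map `(θ,s,t) ↦ u θ s t`
is smooth, all its partial derivatives are Schwartz-class in `(s,t)` locally uniformly
in `θ`, `σ` is smooth, and each `u θ` is a model eigenfunction of `H(θ)`. -/
structure IsSmoothFamily (a b : ℝ) (u : ℝ → ℝ → ℝ → ℝ) (σ : ℝ → ℝ) : Prop where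
  sub : Set.Ioo a b ⊆ Set.Ioo 0 (π/2)
  smooth : ∀ n : ℕ, ContDiffOn ℝ n (fun p : ℝ × ℝ × ℝ => u p.1 p.2.1 p.2.2)
      (Set.Ioo a b ×ˢ (Set.univ : Set (ℝ × ℝ)))
  sigma_smooth : ∀ n : ℕ, ContDiffOn ℝ n σ (Set.Ioo a b)
  schwartz : ∀ θ ∈ Set.Ioo a b, ∀ m k l n : ℕ, ∃ ε > 0, ∃ C : ℝ,
      ∀ θ' ∈ Set.Ioo a b, |θ' - θ| < ε → ∀ s t : ℝ, 0 ≤ t →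
      |pd1^[k] (pd2^[l] (pdθ^[m] u θ')) s t| ≤ C * (1 + |s| + t) ^ (-(n:ℝ))
  eigen : ∀ θ ∈ Set.Ioo a b, IsModelEigen θ (u θ) (σ θ)

section Engine
variable {E : Type*} [NormedAddCommGroup E] [NormedSpace ℝ E]

lemma fderiv_apply_comm {F : E → ℝ} {p : E} (hF : ContDiffAt ℝ 2 F p) (v w : E) :
    fderiv ℝ (fun q => fderiv ℝ F q v) p w = fderiv ℝ (fun q => fderiv ℝ F q w) p v := by
  have hdiff : DifferentiableAt ℝ (fderiv ℝ F) p :=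
    (hF.fderiv_right (m := 1) le_rfl).differentiableAt one_ne_zero
  have h1 : ∀ z : E, fderiv ℝ (fun q => fderiv ℝ F q z) p
      = (fderiv ℝ (fderiv ℝ F) p).flip z := by
    intro z
    have := fderiv_clm_apply (c := fderiv ℝ F) (u := fun _ => z) hdiff (differentiableAt_const z)
    simpa using this
  have hsymm : IsSymmSndFDerivAt ℝ F p := hF.isSymmSndFDerivAt (by simp [minSmoothness_of_isRCLikeNormedField])
  rw [h1 v, h1 w]
  exact (hsymm v w).symm

end Engine

/-- The uncurried version of a two-variable function. -/
def F2 (f : ℝ → ℝ → ℝ) : ℝ × ℝ → ℝ := fun p => f p.1 p.2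

/-- Smoothness of every order, in uncurried form. -/
def Sm (f : ℝ → ℝ → ℝ) : Prop := ∀ n : ℕ, ContDiff ℝ n (F2 f)

lemma hasDerivAt_slice1 {f : ℝ → ℝ → ℝ} (hf : DifferentiableAt ℝ (F2 f) (s, t)) :
    HasDerivAt (fun x => f x t) (fderiv ℝ (F2 f) (s, t) (1, 0)) s := by
  have hc : HasDerivAt (fun x : ℝ => (x, t)) ((1 : ℝ), (0 : ℝ)) s :=
    (hasDerivAt_id s).prodMk (hasDerivAt_const s t)
  exact hf.hasFDerivAt.comp_hasDerivAt s hc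

lemma hasDerivAt_slice2 {f : ℝ → ℝ → ℝ} (hf : DifferentiableAt ℝ (F2 f) (s, t)) :
    HasDerivAt (fun y => f s y) (fderiv ℝ (F2 f) (s, t) (0, 1)) t := by
  have hc : HasDerivAt (fun y : ℝ => (s, y)) ((0 : ℝ), (1 : ℝ)) t :=
    (hasDerivAt_const t s).prodMk (hasDerivAt_id t)
  exact hf.hasFDerivAt.comp_hasDerivAt t hc

lemma Sm.diffAt {f : ℝ → ℝ → ℝ} (hf : Sm f) (p : ℝ × ℝ) : DifferentiableAt ℝ (F2 f) p :=
  (hf 1).differentiable one_ne_zero p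

lemma pd1_eq {f : ℝ → ℝ → ℝ} (hf : Sm f) (s t : ℝ) :
    pd1 f s t = fderiv ℝ (F2 f) (s, t) (1, 0) :=
  (hasDerivAt_slice1 (hf.diffAt (s, t))).deriv

lemma pd2_eq {f : ℝ → ℝ → ℝ} (hf : Sm f) (s t : ℝ) :
    pd2 f s t = fderiv ℝ (F2 f) (s, t) (0, 1) :=
  (hasDerivAt_slice2 (hf.diffAt (s, t))).deriv

lemma Sm.hasDerivAt1 {f : ℝ → ℝ → ℝ} (hf : Sm f) (s t : ℝ) :
    HasDerivAt (fun x => f x t) (pd1 f s t) s := by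
  rw [pd1_eq hf]; exact hasDerivAt_slice1 (hf.diffAt (s, t))

lemma Sm.hasDerivAt2 {f : ℝ → ℝ → ℝ} (hf : Sm f) (s t : ℝ) :
    HasDerivAt (fun y => f s y) (pd2 f s t) t := by
  rw [pd2_eq hf]; exact hasDerivAt_slice2 (hf.diffAt (s, t))

lemma contDiff_fderiv_apply {f : ℝ → ℝ → ℝ} (hf : Sm f) (v : ℝ × ℝ) (n : ℕ) :
    ContDiff ℝ n (fun p => fderiv ℝ (F2 f) p v) := by
  have h1 : ContDiff ℝ n (fderiv ℝ (F2 f)) := by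
    refine (hf (n + 1)).fderiv_right ?_
    exact_mod_cast le_rfl
  exact h1.clm_apply contDiff_const

lemma Sm.pd1 {f : ℝ → ℝ → ℝ} (hf : Sm f) : Sm (_root_.pd1 f) := by
  intro n
  have : F2 (_root_.pd1 f) = fun p => fderiv ℝ (F2 f) p (1, 0) := by
    funext p
    exact pd1_eq hf p.1 p.2
  rw [this]; exact contDiff_fderiv_apply hf _ n

lemma Sm.pd2 {f : ℝ → ℝ → ℝ} (hf : Sm f) : Sm (_root_.pd2 f) := by
  intro n
  have : F2 (_root_.pd2 f) = fun p => fderiv ℝ (F2 f) p (0, 1) := by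
    funext p
    exact pd2_eq hf p.1 p.2
  rw [this]; exact contDiff_fderiv_apply hf _ n

lemma Sm.cont {f : ℝ → ℝ → ℝ} (hf : Sm f) : Continuous (F2 f) := (hf 0).continuous

/-- Clairaut for `pd1`/`pd2`. -/
lemma pd_comm {f : ℝ → ℝ → ℝ} (hf : Sm f) : pd1 (pd2 f) = pd2 (pd1 f) := by
  funext s t
  have e2 : F2 (pd2 f) = fun p => fderiv ℝ (F2 f) p (0, 1) := by
    funext p; exact pd2_eq hf p.1 p.2
  have e1 : F2 (pd1 f) = fun p => fderiv ℝ (F2 f) p (1, 0) := by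
    funext p; exact pd1_eq hf p.1 p.2
  rw [pd1_eq hf.pd2 s t, pd2_eq hf.pd1 s t, e1, e2]
  exact fderiv_apply_comm ((hf 2).contDiffAt) _ _

/-! ### Three-variable machinery for the parameter θ -/

section Param

variable {a b : ℝ}

/-- The open parameter domain. -/
def Odom (a b : ℝ) : Set (ℝ × ℝ × ℝ) := Set.Ioo a b ×ˢ (Set.univ : Set (ℝ × ℝ))

lemma isOpen_Odom : IsOpen (Odom a b) := isOpen_Ioo.prod isOpen_univ

/-- Smooth (all orders) on the parameter domain. -/
def SmOn (a b : ℝ) (G : ℝ × ℝ × ℝ → ℝ) : Prop := ∀ n : ℕ, ContDiffOn ℝ n G (Odom a b)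

/-- Directional derivative operator on three-variable functions. -/
def D3 (v : ℝ × ℝ × ℝ) (G : ℝ × ℝ × ℝ → ℝ) : ℝ × ℝ × ℝ → ℝ := fun p => fderiv ℝ G p v

lemma SmOn.diffAt {G : ℝ × ℝ × ℝ → ℝ} (hG : SmOn a b G) {p : ℝ × ℝ × ℝ}
    (hp : p ∈ Odom a b) : DifferentiableAt ℝ G p :=
  ((hG 1).differentiableOn one_ne_zero).differentiableAt
    (isOpen_Odom.mem_nhds hp)

lemma SmOn.D3 {G : ℝ × ℝ × ℝ → ℝ} (hG : SmOn a b G) (v : ℝ × ℝ × ℝ) :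
    SmOn a b (_root_.D3 v G) := by
  intro n
  have h1 : ContDiffOn ℝ n (fderiv ℝ G) (Odom a b) := by
    refine (hG (n + 1)).fderiv_of_isOpen isOpen_Odom ?_
    exact_mod_cast le_rfl
  exact h1.clm_apply contDiffOn_const

lemma SmOn.comm {G : ℝ × ℝ × ℝ → ℝ} (hG : SmOn a b G) {p : ℝ × ℝ × ℝ}
    (hp : p ∈ Odom a b) (v w : ℝ × ℝ × ℝ) : _root_.D3 v (_root_.D3 w G) p = _root_.D3 w (_root_.D3 v G) p :=
  fderiv_apply_comm ((hG 2).contDiffAt (isOpen_Odom.mem_nhds hp)) w v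

lemma D3_congr {G₁ G₂ : ℝ × ℝ × ℝ → ℝ} (hEq : ∀ q ∈ Odom a b, G₁ q = G₂ q)
    {p : ℝ × ℝ × ℝ} (hp : p ∈ Odom a b) (v : ℝ × ℝ × ℝ) : D3 v G₁ p = D3 v G₂ p := by
  have : G₁ =ᶠ[nhds p] G₂ :=
    Filter.eventuallyEq_of_mem (isOpen_Odom.mem_nhds hp) hEq
  unfold D3
  rw [this.fderiv_eq]

/-- Slices of three-variable functions. -/
lemma hasDerivAt_3θ {G : ℝ × ℝ × ℝ → ℝ} {θ s t : ℝ}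
    (hG : DifferentiableAt ℝ G (θ, s, t)) :
    HasDerivAt (fun x => G (x, s, t)) (D3 (1, 0, 0) G (θ, s, t)) θ := by
  have hc : HasDerivAt (fun x : ℝ => (x, s, t)) ((1 : ℝ), (0 : ℝ), (0 : ℝ)) θ :=
    (hasDerivAt_id θ).prodMk (hasDerivAt_const θ (s, t))
  exact hG.hasFDerivAt.comp_hasDerivAt θ hc

lemma hasDerivAt_3s {G : ℝ × ℝ × ℝ → ℝ} {θ s t : ℝ}
    (hG : DifferentiableAt ℝ G (θ, s, t)) :
    HasDerivAt (fun x => G (θ, x, t)) (D3 (0, 1, 0) G (θ, s, t)) s := by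
  have hc : HasDerivAt (fun x : ℝ => (θ, x, t)) ((0 : ℝ), (1 : ℝ), (0 : ℝ)) s :=
    (hasDerivAt_const s θ).prodMk ((hasDerivAt_id s).prodMk (hasDerivAt_const s t))
  exact hG.hasFDerivAt.comp_hasDerivAt s hc

lemma hasDerivAt_3t {G : ℝ × ℝ × ℝ → ℝ} {θ s t : ℝ}
    (hG : DifferentiableAt ℝ G (θ, s, t)) :
    HasDerivAt (fun y => G (θ, s, y)) (D3 (0, 0, 1) G (θ, s, t)) t := by
  have hc : HasDerivAt (fun y : ℝ => (θ, s, y)) ((0 : ℝ), (0 : ℝ), (1 : ℝ)) t :=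
    (hasDerivAt_const t θ).prodMk ((hasDerivAt_const t s).prodMk (hasDerivAt_id t))
  exact hG.hasFDerivAt.comp_hasDerivAt t hc

/-- Restriction of a smooth-on-domain function to a θ-slice is smooth. -/
lemma SmOn.slice {G : ℝ × ℝ × ℝ → ℝ} (hG : SmOn a b G) {θ : ℝ} (hθ : θ ∈ Set.Ioo a b) :
    Sm (fun s t => G (θ, s, t)) := by
  intro n
  have hι : ContDiff ℝ n (fun q : ℝ × ℝ => ((θ, q.1, q.2) : ℝ × ℝ × ℝ)) :=
    contDiff_const.prodMk contDiff_id
  have : F2 (fun s t => G (θ, s, t)) = G ∘ fun q : ℝ × ℝ => ((θ, q.1, q.2) : ℝ × ℝ × ℝ) := by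
    funext p; rfl
  rw [this, ← contDiffOn_univ]
  refine (hG n).comp (hι.contDiffOn) ?_
  intro q _
  exact ⟨hθ, trivial⟩

end Param

/-! ### Dictionary between curried partial derivatives and `D3` for the family -/

section Family

variable {a b : ℝ} {u : ℝ → ℝ → ℝ → ℝ} {σ : ℝ → ℝ}

/-- Uncurried version of the family. -/
def W3 (u : ℝ → ℝ → ℝ → ℝ) : ℝ × ℝ × ℝ → ℝ := fun p => u p.1 p.2.1 p.2.2

lemma IsSmoothFamily.smOn (h : IsSmoothFamily a b u σ) : SmOn a b (W3 u) := fun n => h.smooth n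

lemma mem_Odom {θ : ℝ} (hθ : θ ∈ Set.Ioo a b) (s t : ℝ) : ((θ, s, t) : ℝ × ℝ × ℝ) ∈ Odom a b :=
  ⟨hθ, trivial⟩

lemma pd1_slice (h : IsSmoothFamily a b u σ) {θ' : ℝ} (hθ' : θ' ∈ Set.Ioo a b) :
    pd1 (u θ') = fun s t => D3 (0, 1, 0) (W3 u) (θ', s, t) := by
  funext s t
  exact (hasDerivAt_3s (h.smOn.diffAt (mem_Odom hθ' s t))).deriv

lemma pd2_slice (h : IsSmoothFamily a b u σ) {θ' : ℝ} (hθ' : θ' ∈ Set.Ioo a b) :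
    pd2 (u θ') = fun s t => D3 (0, 0, 1) (W3 u) (θ', s, t) := by
  funext s t
  exact (hasDerivAt_3t (h.smOn.diffAt (mem_Odom hθ' s t))).deriv

lemma pd11_slice (h : IsSmoothFamily a b u σ) {θ' : ℝ} (hθ' : θ' ∈ Set.Ioo a b) :
    pd1 (pd1 (u θ')) = fun s t => D3 (0, 1, 0) (D3 (0, 1, 0) (W3 u)) (θ', s, t) := by
  funext s t
  show deriv (fun x => pd1 (u θ') x t) s = _
  rw [pd1_slice h hθ']
  exact (hasDerivAt_3s ((h.smOn.D3 (0, 1, 0)).diffAt (mem_Odom hθ' s t))).deriv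

lemma pd22_slice (h : IsSmoothFamily a b u σ) {θ' : ℝ} (hθ' : θ' ∈ Set.Ioo a b) :
    pd2 (pd2 (u θ')) = fun s t => D3 (0, 0, 1) (D3 (0, 0, 1) (W3 u)) (θ', s, t) := by
  funext s t
  show deriv (fun y => pd2 (u θ') s y) t = _
  rw [pd2_slice h hθ']
  exact (hasDerivAt_3t ((h.smOn.D3 (0, 0, 1)).diffAt (mem_Odom hθ' s t))).deriv

variable {θ : ℝ}

lemma pdθ_slice (h : IsSmoothFamily a b u σ) (hθ : θ ∈ Set.Ioo a b) :
    pdθ u θ = fun s t => D3 (1, 0, 0) (W3 u) (θ, s, t) := by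
  funext s t
  exact (hasDerivAt_3θ (h.smOn.diffAt (mem_Odom hθ s t))).deriv

lemma hasDerivAt_pdθ (h : IsSmoothFamily a b u σ) (hθ : θ ∈ Set.Ioo a b) (s t : ℝ) :
    HasDerivAt (fun θ' => u θ' s t) (pdθ u θ s t) θ := by
  have := hasDerivAt_3θ (h.smOn.diffAt (mem_Odom hθ s t))
  rw [pdθ_slice h hθ]
  exact this

lemma sm_pdθ (h : IsSmoothFamily a b u σ) (hθ : θ ∈ Set.Ioo a b) : Sm (pdθ u θ) := by
  rw [pdθ_slice h hθ]
  exact (h.smOn.D3 (1, 0, 0)).slice hθ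

lemma pd1_pdθ (h : IsSmoothFamily a b u σ) (hθ : θ ∈ Set.Ioo a b) :
    pd1 (pdθ u θ) = fun s t => D3 (0, 1, 0) (D3 (1, 0, 0) (W3 u)) (θ, s, t) := by
  funext s t
  show deriv (fun x => pdθ u θ x t) s = _
  rw [pdθ_slice h hθ]
  exact (hasDerivAt_3s ((h.smOn.D3 (1, 0, 0)).diffAt (mem_Odom hθ s t))).deriv

lemma pd2_pdθ (h : IsSmoothFamily a b u σ) (hθ : θ ∈ Set.Ioo a b) :
    pd2 (pdθ u θ) = fun s t => D3 (0, 0, 1) (D3 (1, 0, 0) (W3 u)) (θ, s, t) := by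
  funext s t
  show deriv (fun y => pdθ u θ s y) t = _
  rw [pdθ_slice h hθ]
  exact (hasDerivAt_3t ((h.smOn.D3 (1, 0, 0)).diffAt (mem_Odom hθ s t))).deriv

lemma pd11_pdθ (h : IsSmoothFamily a b u σ) (hθ : θ ∈ Set.Ioo a b) :
    pd1 (pd1 (pdθ u θ)) = fun s t => D3 (0, 1, 0) (D3 (0, 1, 0) (D3 (1, 0, 0) (W3 u))) (θ, s, t) := by
  funext s t
  show deriv (fun x => pd1 (pdθ u θ) x t) s = _
  rw [pd1_pdθ h hθ]
  exact (hasDerivAt_3s (((h.smOn.D3 (1, 0, 0)).D3 (0, 1, 0)).diffAt (mem_Odom hθ s t))).deriv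

lemma pd22_pdθ (h : IsSmoothFamily a b u σ) (hθ : θ ∈ Set.Ioo a b) :
    pd2 (pd2 (pdθ u θ)) = fun s t => D3 (0, 0, 1) (D3 (0, 0, 1) (D3 (1, 0, 0) (W3 u))) (θ, s, t) := by
  funext s t
  show deriv (fun y => pd2 (pdθ u θ) s y) t = _
  rw [pd2_pdθ h hθ]
  exact (hasDerivAt_3t (((h.smOn.D3 (1, 0, 0)).D3 (0, 0, 1)).diffAt (mem_Odom hθ s t))).deriv

/-- Swap the θ-derivative past two s/t-derivatives. -/
lemma comm3 (h : IsSmoothFamily a b u σ) (hθ : θ ∈ Set.Ioo a b) (v : ℝ × ℝ × ℝ) (s t : ℝ) :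
    D3 v (D3 v (D3 (1, 0, 0) (W3 u))) (θ, s, t)
      = D3 (1, 0, 0) (D3 v (D3 v (W3 u))) (θ, s, t) := by
  have hp := mem_Odom hθ s t
  have c1 : ∀ q ∈ Odom a b, D3 v (D3 (1, 0, 0) (W3 u)) q = D3 (1, 0, 0) (D3 v (W3 u)) q :=
    fun q hq => h.smOn.comm hq v (1, 0, 0)
  calc D3 v (D3 v (D3 (1, 0, 0) (W3 u))) (θ, s, t)
      = D3 v (D3 (1, 0, 0) (D3 v (W3 u))) (θ, s, t) := D3_congr c1 hp v
    _ = D3 (1, 0, 0) (D3 v (D3 v (W3 u))) (θ, s, t) := (h.smOn.D3 v).comm hp v (1, 0, 0)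

/-- θ-differentiation of `pd1 (pd1 (u θ'))`. -/
lemma hasDerivAt_pd11_param (h : IsSmoothFamily a b u σ) (hθ : θ ∈ Set.Ioo a b) (s t : ℝ) :
    HasDerivAt (fun θ' => pd1 (pd1 (u θ')) s t) (pd1 (pd1 (pdθ u θ)) s t) θ := by
  have hval : pd1 (pd1 (pdθ u θ)) s t
      = D3 (1, 0, 0) (D3 (0, 1, 0) (D3 (0, 1, 0) (W3 u))) (θ, s, t) := by
    rw [pd11_pdθ h hθ]
    exact comm3 h hθ (0, 1, 0) s t
  have hder : HasDerivAt (fun θ' => D3 (0, 1, 0) (D3 (0, 1, 0) (W3 u)) (θ', s, t))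
      (D3 (1, 0, 0) (D3 (0, 1, 0) (D3 (0, 1, 0) (W3 u))) (θ, s, t)) θ :=
    hasDerivAt_3θ (((h.smOn.D3 (0, 1, 0)).D3 (0, 1, 0)).diffAt (mem_Odom hθ s t))
  rw [hval]
  refine hder.congr_of_eventuallyEq ?_
  filter_upwards [Ioo_mem_nhds hθ.1 hθ.2] with θ' hθ'
  rw [pd11_slice h hθ']

/-- θ-differentiation of `pd2 (pd2 (u θ'))`. -/
lemma hasDerivAt_pd22_param (h : IsSmoothFamily a b u σ) (hθ : θ ∈ Set.Ioo a b) (s t : ℝ) :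
    HasDerivAt (fun θ' => pd2 (pd2 (u θ')) s t) (pd2 (pd2 (pdθ u θ)) s t) θ := by
  have hval : pd2 (pd2 (pdθ u θ)) s t
      = D3 (1, 0, 0) (D3 (0, 0, 1) (D3 (0, 0, 1) (W3 u))) (θ, s, t) := by
    rw [pd22_pdθ h hθ]
    exact comm3 h hθ (0, 0, 1) s t
  have hder : HasDerivAt (fun θ' => D3 (0, 0, 1) (D3 (0, 0, 1) (W3 u)) (θ', s, t))
      (D3 (1, 0, 0) (D3 (0, 0, 1) (D3 (0, 0, 1) (W3 u))) (θ, s, t)) θ :=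
    hasDerivAt_3θ (((h.smOn.D3 (0, 0, 1)).D3 (0, 0, 1)).diffAt (mem_Odom hθ s t))
  rw [hval]
  refine hder.congr_of_eventuallyEq ?_
  filter_upwards [Ioo_mem_nhds hθ.1 hθ.2] with θ' hθ'
  rw [pd22_slice h hθ']

/-- Neumann boundary condition for the θ-derivative. -/
lemma neumann_pdθ (h : IsSmoothFamily a b u σ) (hθ : θ ∈ Set.Ioo a b) (s : ℝ) :
    pd2 (pdθ u θ) s 0 = 0 := by
  have hval : pd2 (pdθ u θ) s 0
      = D3 (1, 0, 0) (D3 (0, 0, 1) (W3 u)) (θ, s, 0) := by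
    rw [pd2_pdθ h hθ]
    exact h.smOn.comm (mem_Odom hθ s 0) (0, 0, 1) (1, 0, 0)
  have hder : HasDerivAt (fun θ' => D3 (0, 0, 1) (W3 u) (θ', s, 0))
      (D3 (1, 0, 0) (D3 (0, 0, 1) (W3 u)) (θ, s, 0)) θ :=
    hasDerivAt_3θ ((h.smOn.D3 (0, 0, 1)).diffAt (mem_Odom hθ s 0))
  have hzero : HasDerivAt (fun _ : ℝ => (0 : ℝ))
      (D3 (1, 0, 0) (D3 (0, 0, 1) (W3 u)) (θ, s, 0)) θ := by
    refine hder.congr_of_eventuallyEq ?_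
    filter_upwards [Ioo_mem_nhds hθ.1 hθ.2] with θ' hθ'
    calc (fun _ : ℝ => (0:ℝ)) θ' = pd2 (u θ') s 0 := ((h.eigen θ' hθ').neumann s).symm
      _ = _ := by rw [pd2_slice h hθ']
  have := hzero.deriv
  rw [deriv_const] at this
  rw [hval, ← this]

end Family

/-! ### Decay and integrability toolkit -/

/-- Decay of order `n` on the closed half plane. -/
def DecN (n : ℕ) (f : ℝ → ℝ → ℝ) : Prop :=
  ∃ C : ℝ, 0 ≤ C ∧ ∀ s t : ℝ, 0 ≤ t → |f s t| ≤ C * (1 + |s| + t) ^ (-(n : ℝ))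

lemma base_pos {s t : ℝ} (ht : 0 ≤ t) : (0:ℝ) < 1 + |s| + t := by positivity

lemma base_one_le {s t : ℝ} (ht : 0 ≤ t) : (1:ℝ) ≤ 1 + |s| + t := by
  have := abs_nonneg s; linarith

lemma rpow_neg_nat {x : ℝ} (hx : 0 < x) (n : ℕ) : x ^ (-(n:ℝ)) = (x ^ n)⁻¹ := by
  rw [Real.rpow_neg hx.le, Real.rpow_natCast]

lemma rpow_base_le_one {s t : ℝ} (ht : 0 ≤ t) (n : ℕ) : (1 + |s| + t) ^ (-(n:ℝ)) ≤ 1 := by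
  rw [rpow_neg_nat (base_pos ht)]
  rw [inv_le_one_iff₀]
  right
  exact one_le_pow₀ (base_one_le ht)

lemma rpow_anti {s t : ℝ} (ht : 0 ≤ t) {m n : ℕ} (hmn : m ≤ n) :
    (1 + |s| + t) ^ (-(n:ℝ)) ≤ (1 + |s| + t) ^ (-(m:ℝ)) := by
  apply Real.rpow_le_rpow_of_exponent_le (base_one_le ht)
  simp only [neg_le_neg_iff]
  exact_mod_cast hmn

lemma SchwartzHalf.decN {f : ℝ → ℝ → ℝ} (hf : SchwartzHalf f) (k l n : ℕ) :
    DecN n (pd1^[k] (pd2^[l] f)) := by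
  obtain ⟨C, hC⟩ := hf k l n
  refine ⟨max C 0, le_max_right _ _, fun s t ht => ?_⟩
  refine (hC s t ht).trans ?_
  have : (0:ℝ) < (1 + |s| + t) ^ (-(n:ℝ)) := Real.rpow_pos_of_pos (base_pos ht) _
  nlinarith [le_max_left C (0:ℝ)]

lemma DecN.of_le {f : ℝ → ℝ → ℝ} {m n : ℕ} (hf : DecN n f) (hmn : m ≤ n) : DecN m f := by
  obtain ⟨C, hC0, hC⟩ := hf
  exact ⟨C, hC0, fun s t ht => (hC s t ht).trans
    (mul_le_mul_of_nonneg_left (rpow_anti ht hmn) hC0)⟩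

lemma DecN.bound {f : ℝ → ℝ → ℝ} {n : ℕ} (hf : DecN n f) :
    ∃ C : ℝ, 0 ≤ C ∧ ∀ s t : ℝ, 0 ≤ t → |f s t| ≤ C := by
  obtain ⟨C, hC0, hC⟩ := hf.of_le (Nat.zero_le n)
  refine ⟨C, hC0, fun s t ht => (hC s t ht).trans ?_⟩
  nlinarith [rpow_base_le_one (s := s) ht 0]

lemma DecN.mul {f g : ℝ → ℝ → ℝ} {n : ℕ} (hf : DecN n f) (hg : DecN 0 g) :
    DecN n (fun s t => f s t * g s t) := by
  obtain ⟨C, hC0, hC⟩ := hf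
  obtain ⟨C', hC'0, hC'⟩ := hg.bound
  refine ⟨C * C', by positivity, fun s t ht => ?_⟩
  rw [abs_mul]
  calc |f s t| * |g s t| ≤ (C * (1 + |s| + t) ^ (-(n:ℝ))) * C' := by
        apply mul_le_mul (hC s t ht) (hC' s t ht) (abs_nonneg _)
        positivity
    _ = C * C' * (1 + |s| + t) ^ (-(n:ℝ)) := by ring

lemma DecN.add {f g : ℝ → ℝ → ℝ} {n : ℕ} (hf : DecN n f) (hg : DecN n g) :
    DecN n (fun s t => f s t + g s t) := by
  obtain ⟨C, hC0, hC⟩ := hf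
  obtain ⟨C', hC'0, hC'⟩ := hg
  refine ⟨C + C', by positivity, fun s t ht => ?_⟩
  calc |f s t + g s t| ≤ |f s t| + |g s t| := abs_add_le _ _
    _ ≤ C * (1 + |s| + t) ^ (-(n:ℝ)) + C' * (1 + |s| + t) ^ (-(n:ℝ)) :=
        add_le_add (hC s t ht) (hC' s t ht)
    _ = (C + C') * (1 + |s| + t) ^ (-(n:ℝ)) := by ring

lemma DecN.neg {f : ℝ → ℝ → ℝ} {n : ℕ} (hf : DecN n f) : DecN n (fun s t => - f s t) := by
  obtain ⟨C, hC0, hC⟩ := hf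
  exact ⟨C, hC0, fun s t ht => by rw [abs_neg]; exact hC s t ht⟩

lemma DecN.sub {f g : ℝ → ℝ → ℝ} {n : ℕ} (hf : DecN n f) (hg : DecN n g) :
    DecN n (fun s t => f s t - g s t) := by
  have := hf.add hg.neg
  simpa [sub_eq_add_neg] using this

lemma DecN.const_mul {f : ℝ → ℝ → ℝ} {n : ℕ} (hf : DecN n f) (c : ℝ) :
    DecN n (fun s t => c * f s t) := by
  obtain ⟨C, hC0, hC⟩ := hf
  refine ⟨|c| * C, by positivity, fun s t ht => ?_⟩
  rw [abs_mul, mul_assoc]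
  exact mul_le_mul_of_nonneg_left (hC s t ht) (abs_nonneg c)

/-- Multiplying by a function bounded by the weight `1 + |s| + t` costs one order. -/
lemma DecN.mul_weight {f g : ℝ → ℝ → ℝ} {n : ℕ} (hf : DecN (n+1) f)
    (hg : ∀ s t : ℝ, 0 ≤ t → |g s t| ≤ 1 + |s| + t) :
    DecN n (fun s t => g s t * f s t) := by
  obtain ⟨C, hC0, hC⟩ := hf
  refine ⟨C, hC0, fun s t ht => ?_⟩
  rw [abs_mul]
  have hx := base_pos (s := s) ht
  calc |g s t| * |f s t| ≤ (1 + |s| + t) * (C * (1 + |s| + t) ^ (-((n:ℝ)+1))) := by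
        refine mul_le_mul (hg s t ht) ?_ (abs_nonneg _) hx.le
        have := hC s t ht
        convert this using 3
        · rfl
        · push_cast; ring
    _ = C * ((1 + |s| + t) ^ (-((n:ℝ)+1)) * (1 + |s| + t)) := by ring
    _ = C * (1 + |s| + t) ^ (-(n:ℝ)) := by
        rw [← Real.rpow_add_one hx.ne']
        ring_nf

lemma abs_s_le_weight (s t : ℝ) (ht : 0 ≤ t) : |(fun s _ : ℝ => s) s t| ≤ 1 + |s| + t := by
  simp only; linarith [abs_nonneg s]

lemma abs_t_le_weight (s t : ℝ) (ht : 0 ≤ t) : |(fun _ t : ℝ => t) s t| ≤ 1 + |s| + t := by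
  simp only [abs_of_nonneg ht]; linarith [abs_nonneg s]

lemma abs_V_le_weight (θ s t : ℝ) (ht : 0 ≤ t) : |Vpot θ s t| ≤ 1 + |s| + t := by
  unfold Vpot
  have h1 : |t * Real.cos θ| ≤ t := by
    rw [abs_mul, abs_of_nonneg ht]
    nlinarith [abs_cos_le_one θ, abs_nonneg (Real.cos θ)]
  have h2 : |s * Real.sin θ| ≤ |s| := by
    rw [abs_mul]
    nlinarith [abs_sin_le_one θ, abs_nonneg s, abs_nonneg (Real.sin θ)]
  calc |t * Real.cos θ - s * Real.sin θ| ≤ |t * Real.cos θ| + |s * Real.sin θ| := abs_sub _ _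
    _ ≤ t + |s| := add_le_add h1 h2
    _ ≤ 1 + |s| + t := by linarith

/-! ### Integrability on the half plane -/

/-- The half-plane measure (first variable full line, second restricted to `Ioi 0`). -/
def HM : Measure (ℝ × ℝ) := (volume : Measure ℝ).prod ((volume : Measure ℝ).restrict (Set.Ioi 0))

instance : SigmaFinite ((volume : Measure ℝ).restrict (Set.Ioi (0:ℝ))) := by infer_instance

lemma ae_snd_pos : ∀ᵐ p : ℝ × ℝ ∂HM, p.2 ∈ Set.Ioi (0:ℝ) := by
  rw [MeasureTheory.ae_iff]
  have hset : {p : ℝ × ℝ | ¬ p.2 ∈ Set.Ioi (0:ℝ)}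
      = (Set.univ : Set ℝ) ×ˢ (Set.Ioi (0:ℝ))ᶜ := by
    ext p; simp [Set.mem_prod]
  rw [hset]
  unfold HM
  rw [Measure.prod_prod, Measure.restrict_apply (measurableSet_Ioi.compl)]
  have : (Set.Ioi (0:ℝ))ᶜ ∩ Set.Ioi 0 = ∅ := by
    ext x; simp
  rw [this]
  simp

lemma key_prod {s t : ℝ} (ht : 0 ≤ t) :
    (1 + |s| + t) ^ (-(4:ℝ)) ≤ (1 + ‖s‖) ^ (-(2:ℝ)) * (1 + ‖t‖) ^ (-(2:ℝ)) := by
  have hA : (0:ℝ) ≤ |s| := abs_nonneg s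
  have h1 : (0:ℝ) < 1 + |s| := by linarith
  have h2 : (0:ℝ) < 1 + t := by linarith
  have e4 : (-(4:ℝ)) = -((4:ℕ):ℝ) := by norm_num
  have e2 : (-(2:ℝ)) = -((2:ℕ):ℝ) := by norm_num
  rw [Real.norm_eq_abs, Real.norm_eq_abs, abs_of_nonneg ht, e4, e2,
    rpow_neg_nat (base_pos ht), rpow_neg_nat h1, rpow_neg_nat h2, ← mul_inv]
  have hle : (1 + |s|) ^ 2 * (1 + t) ^ 2 ≤ (1 + |s| + t) ^ 4 := by
    have hb : (1 + |s|) * (1 + t) ≤ (1 + |s| + t) ^ 2 := by nlinarith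
    calc (1 + |s|) ^ 2 * (1 + t) ^ 2 = ((1 + |s|) * (1 + t)) ^ 2 := by ring
      _ ≤ ((1 + |s| + t) ^ 2) ^ 2 := by
          apply pow_le_pow_left₀ (by positivity) hb
      _ = (1 + |s| + t) ^ 4 := by ring
  exact inv_anti₀ (by positivity) hle

lemma key_t {s t : ℝ} (ht : 0 ≤ t) :
    (1 + |s| + t) ^ (-(4:ℝ)) ≤ (1 + ‖t‖) ^ (-(2:ℝ)) := by
  have h := key_prod (s := s) ht
  have h2 : (1 + ‖s‖) ^ (-(2:ℝ)) ≤ 1 := by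
    rw [Real.norm_eq_abs]
    have e2 : (-(2:ℝ)) = -((2:ℕ):ℝ) := by norm_num
    rw [e2, rpow_neg_nat (by positivity)]
    rw [inv_le_one_iff₀]; right
    exact one_le_pow₀ (by simp [abs_nonneg])
  have hpos : (0:ℝ) ≤ (1 + ‖t‖) ^ (-(2:ℝ)) := Real.rpow_nonneg (by positivity) _
  nlinarith
lemma key_s {s t : ℝ} (ht : 0 ≤ t) :
    (1 + |s| + t) ^ (-(4:ℝ)) ≤ (1 + ‖s‖) ^ (-(2:ℝ)) := by
  have h := key_prod (s := s) ht
  have h2 : (1 + ‖t‖) ^ (-(2:ℝ)) ≤ 1 := by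
    rw [Real.norm_eq_abs]
    have e2 : (-(2:ℝ)) = -((2:ℕ):ℝ) := by norm_num
    rw [e2, rpow_neg_nat (by positivity)]
    rw [inv_le_one_iff₀]; right
    exact one_le_pow₀ (by simp [abs_nonneg])
  have hpos : (0:ℝ) ≤ (1 + ‖s‖) ^ (-(2:ℝ)) := Real.rpow_nonneg (by positivity) _
  nlinarith

lemma J2 : MeasureTheory.Integrable (fun x : ℝ => (1 + ‖x‖) ^ (-(2:ℝ))) volume :=
  integrable_one_add_norm (by simp)

/-- Continuous functions with fourth-order decay are integrable on the half plane. -/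
lemma integrable_dec {f : ℝ → ℝ → ℝ} (hc : Continuous (F2 f)) (hd : DecN 4 f) :
    MeasureTheory.Integrable (F2 f) HM := by
  obtain ⟨C, hC0, hC⟩ := hd
  have hint : MeasureTheory.Integrable
      (fun p : ℝ × ℝ => C * ((1 + ‖p.1‖) ^ (-(2:ℝ)) * (1 + ‖p.2‖) ^ (-(2:ℝ)))) HM :=
    (J2.mul_prod (J2.restrict (s := Set.Ioi 0))).const_mul C
  refine hint.mono' hc.aestronglyMeasurable ?_
  filter_upwards [ae_snd_pos] with p hp
  have ht : (0:ℝ) ≤ p.2 := le_of_lt hp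
  calc ‖F2 f p‖ = |f p.1 p.2| := rfl
    _ ≤ C * (1 + |p.1| + p.2) ^ (-(4:ℝ)) := hC p.1 p.2 ht
    _ ≤ C * ((1 + ‖p.1‖) ^ (-(2:ℝ)) * (1 + ‖p.2‖) ^ (-(2:ℝ))) := by
        apply mul_le_mul_of_nonneg_left _ hC0
        exact key_prod ht

lemma decN4_of {f : ℝ → ℝ → ℝ} {n : ℕ} (hf : DecN n f) (hn : 4 ≤ n) : DecN 4 f := hf.of_le hn

lemma intHalf_eq_prod {f : ℝ → ℝ → ℝ} (hf : MeasureTheory.Integrable (F2 f) HM) :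
    intHalf f = ∫ p, F2 f p ∂HM := (MeasureTheory.integral_prod _ hf).symm

lemma intHalf_sub {f g : ℝ → ℝ → ℝ} (hf : MeasureTheory.Integrable (F2 f) HM)
    (hg : MeasureTheory.Integrable (F2 g) HM) :
    intHalf (fun s t => f s t - g s t) = intHalf f - intHalf g := by
  have : F2 (fun s t => f s t - g s t) = fun p => F2 f p - F2 g p := rfl
  rw [intHalf_eq_prod (by rw [this]; exact hf.sub hg), intHalf_eq_prod hf, intHalf_eq_prod hg,
    this, MeasureTheory.integral_sub hf hg]

lemma intHalf_add {f g : ℝ → ℝ → ℝ} (hf : MeasureTheory.Integrable (F2 f) HM)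
    (hg : MeasureTheory.Integrable (F2 g) HM) :
    intHalf (fun s t => f s t + g s t) = intHalf f + intHalf g := by
  have : F2 (fun s t => f s t + g s t) = fun p => F2 f p + F2 g p := rfl
  rw [intHalf_eq_prod (by rw [this]; exact hf.add hg), intHalf_eq_prod hf, intHalf_eq_prod hg,
    this, MeasureTheory.integral_add hf hg]

lemma intHalf_const_mul (c : ℝ) {f : ℝ → ℝ → ℝ} :
    intHalf (fun s t => c * f s t) = c * intHalf f := by
  unfold intHalf
  rw [← MeasureTheory.integral_const_mul]
  congr 1
  funext s
  rw [← MeasureTheory.integral_const_mul]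

/-- `intHalf` only depends on values for `t > 0`. -/
lemma intHalf_congr {f g : ℝ → ℝ → ℝ} (hfg : ∀ s t : ℝ, 0 < t → f s t = g s t) :
    intHalf f = intHalf g := by
  unfold intHalf
  congr 1
  funext s
  apply MeasureTheory.setIntegral_congr_fun measurableSet_Ioi
  intro t ht
  exact hfg s t ht

/-! ### Slices: integrability and decay at infinity -/

lemma DecN.norm4 {f : ℝ → ℝ → ℝ} (hd : DecN 4 f) :
    ∃ C : ℝ, 0 ≤ C ∧ ∀ s t : ℝ, 0 ≤ t → |f s t| ≤ C * (1 + |s| + t) ^ (-(4:ℝ)) := by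
  obtain ⟨C, h0, hb⟩ := hd
  refine ⟨C, h0, fun s t ht => ?_⟩
  have := hb s t ht
  exact_mod_cast this

lemma Sm.cont_slice_t {f : ℝ → ℝ → ℝ} (hf : Sm f) (s : ℝ) : Continuous (fun t => f s t) :=
  hf.cont.comp (continuous_const.prodMk continuous_id)

lemma Sm.cont_slice_s {f : ℝ → ℝ → ℝ} (hf : Sm f) (t : ℝ) : Continuous (fun s => f s t) :=
  hf.cont.comp (continuous_id.prodMk continuous_const)

lemma integrableOn_slice_t {f : ℝ → ℝ → ℝ} (s : ℝ) (hc : Continuous (fun t => f s t))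
    (hd : DecN 4 f) : MeasureTheory.IntegrableOn (fun t => f s t) (Set.Ioi 0) volume := by
  obtain ⟨C, hC0, hC⟩ := hd.norm4
  have hint : MeasureTheory.Integrable (fun t : ℝ => C * (1 + ‖t‖) ^ (-(2:ℝ)))
      ((volume : Measure ℝ).restrict (Set.Ioi 0)) := (J2.const_mul C).restrict
  refine hint.mono' hc.aestronglyMeasurable ?_
  filter_upwards [MeasureTheory.ae_restrict_mem measurableSet_Ioi] with t ht
  have ht' : (0:ℝ) ≤ t := le_of_lt ht
  calc ‖f s t‖ = |f s t| := Real.norm_eq_abs _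
    _ ≤ C * (1 + |s| + t) ^ (-(4:ℝ)) := hC s t ht'
    _ ≤ C * (1 + ‖t‖) ^ (-(2:ℝ)) := mul_le_mul_of_nonneg_left (key_t ht') hC0

lemma integrable_line_s {f : ℝ → ℝ → ℝ} {t : ℝ} (hc : Continuous (fun s => f s t))
    (hd : DecN 4 f) (ht : 0 ≤ t) :
    MeasureTheory.Integrable (fun s => f s t) volume := by
  obtain ⟨C, hC0, hC⟩ := hd.norm4
  refine (J2.const_mul C).mono' hc.aestronglyMeasurable ?_
  filter_upwards with s
  calc ‖f s t‖ = |f s t| := Real.norm_eq_abs _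
    _ ≤ C * (1 + |s| + t) ^ (-(4:ℝ)) := hC s t ht
    _ ≤ C * (1 + ‖s‖) ^ (-(2:ℝ)) := mul_le_mul_of_nonneg_left (key_s ht) hC0

lemma tendsto_aux2 (C : ℝ) :
    Filter.Tendsto (fun r : ℝ => C * (1 + r) ^ (-(2:ℝ))) Filter.atTop (nhds 0) := by
  have h1 : Filter.Tendsto (fun r : ℝ => 1 + r) Filter.atTop Filter.atTop :=
    Filter.tendsto_atTop_add_const_left _ 1 Filter.tendsto_id
  have h2 := (tendsto_rpow_neg_atTop (by norm_num : (0:ℝ) < 2)).comp h1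
  have := h2.const_mul C
  simpa using this

lemma tendsto_slice_t {f : ℝ → ℝ → ℝ} (hd : DecN 4 f) (s : ℝ) :
    Filter.Tendsto (fun t => f s t) Filter.atTop (nhds 0) := by
  obtain ⟨C, hC0, hC⟩ := hd.norm4
  apply squeeze_zero_norm' (a := fun t : ℝ => C * (1 + t) ^ (-(2:ℝ)))
  · filter_upwards [Filter.eventually_ge_atTop (0:ℝ)] with t ht
    calc ‖f s t‖ = |f s t| := Real.norm_eq_abs _
      _ ≤ C * (1 + |s| + t) ^ (-(4:ℝ)) := hC s t ht
      _ ≤ C * (1 + ‖t‖) ^ (-(2:ℝ)) := mul_le_mul_of_nonneg_left (key_t ht) hC0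
      _ = C * (1 + t) ^ (-(2:ℝ)) := by rw [Real.norm_eq_abs, abs_of_nonneg ht]
  · exact tendsto_aux2 C

lemma tendsto_line_abs {f : ℝ → ℝ → ℝ} {t : ℝ} (hd : DecN 4 f) (ht : 0 ≤ t)
    {l : Filter ℝ} (hl : Filter.Tendsto (fun s : ℝ => |s|) l Filter.atTop) :
    Filter.Tendsto (fun s => f s t) l (nhds 0) := by
  obtain ⟨C, hC0, hC⟩ := hd.norm4
  apply squeeze_zero_norm' (a := fun s : ℝ => C * (1 + |s|) ^ (-(2:ℝ)))
  · filter_upwards with s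
    calc ‖f s t‖ = |f s t| := Real.norm_eq_abs _
      _ ≤ C * (1 + |s| + t) ^ (-(4:ℝ)) := hC s t ht
      _ ≤ C * (1 + ‖s‖) ^ (-(2:ℝ)) := mul_le_mul_of_nonneg_left (key_s ht) hC0
      _ = C * (1 + |s|) ^ (-(2:ℝ)) := by rw [Real.norm_eq_abs]
  · exact (tendsto_aux2 C).comp hl

/-! ### Green's identities -/

lemma green_t {v w : ℝ → ℝ → ℝ} (hv : Sm v) (hw : Sm w)
    (dv0 : DecN 4 v) (dv2 : DecN 4 (pd2 v)) (dv22 : DecN 4 (pd2 (pd2 v)))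
    (dw0 : DecN 4 w) (dw2 : DecN 4 (pd2 w)) (dw22 : DecN 4 (pd2 (pd2 w)))
    (nv : ∀ s : ℝ, pd2 v s 0 = 0) (nw : ∀ s : ℝ, pd2 w s 0 = 0) :
    intHalf (fun s t => pd2 (pd2 v) s t * w s t)
      = intHalf (fun s t => v s t * pd2 (pd2 w) s t) := by
  unfold intHalf
  congr 1
  funext s
  set g : ℝ → ℝ := fun t => pd2 v s t * w s t - v s t * pd2 w s t with hg
  set g' : ℝ → ℝ := fun t => pd2 (pd2 v) s t * w s t - v s t * pd2 (pd2 w) s t with hg'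
  have hder : ∀ t : ℝ, HasDerivAt g (g' t) t := by
    intro t
    have h1 := ((Sm.hasDerivAt2 hv.pd2 s t).fun_mul (hw.hasDerivAt2 s t)).fun_sub
      ((hv.hasDerivAt2 s t).fun_mul (Sm.hasDerivAt2 hw.pd2 s t))
    convert h1 using 1
    · rfl
    · rfl
    simp only [hg']
    ring
  have i1 : MeasureTheory.IntegrableOn (fun t => pd2 (pd2 v) s t * w s t) (Set.Ioi 0) volume := by
    refine integrableOn_slice_t (f := fun s t => pd2 (pd2 v) s t * w s t) s ?_ ?_
    · exact (Sm.cont_slice_t hv.pd2.pd2 s).mul (hw.cont_slice_t s)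
    · exact dv22.mul (dw0.of_le (Nat.zero_le 4))
  have i2 : MeasureTheory.IntegrableOn (fun t => v s t * pd2 (pd2 w) s t) (Set.Ioi 0) volume := by
    refine integrableOn_slice_t (f := fun s t => v s t * pd2 (pd2 w) s t) s ?_ ?_
    · exact (hv.cont_slice_t s).mul (Sm.cont_slice_t hw.pd2.pd2 s)
    · exact dv0.mul (dw22.of_le (Nat.zero_le 4))
  have hzero : ∫ t in Set.Ioi (0:ℝ), g' t = 0 := by
    have hlim : Filter.Tendsto g Filter.atTop (nhds 0) := by
      have h1 := (tendsto_slice_t (f := fun s t => pd2 v s t) dv2 s).mul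
        (tendsto_slice_t (f := fun s t => w s t) dw0 s)
      have h2 := (tendsto_slice_t (f := fun s t => v s t) dv0 s).mul
        (tendsto_slice_t (f := fun s t => pd2 w s t) dw2 s)
      have := h1.sub h2
      simpa using this
    have := MeasureTheory.integral_Ioi_of_hasDerivAt_of_tendsto
      (f := g) (f' := g') (a := 0)
      (hder 0).continuousAt.continuousWithinAt
      (fun x _ => hder x) (i1.sub i2) hlim
    rw [this]
    simp [hg, nv s, nw s]
  show (∫ t in Set.Ioi (0:ℝ), pd2 (pd2 v) s t * w s t)
      = ∫ t in Set.Ioi (0:ℝ), v s t * pd2 (pd2 w) s t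
  have hsub := MeasureTheory.integral_sub i1 i2
  rw [hsub] at hzero
  linarith

lemma green_s {v w : ℝ → ℝ → ℝ} (hv : Sm v) (hw : Sm w)
    (dv0 : DecN 4 v) (dv1 : DecN 4 (pd1 v)) (dv11 : DecN 4 (pd1 (pd1 v)))
    (dw0 : DecN 4 w) (dw1 : DecN 4 (pd1 w)) (dw11 : DecN 4 (pd1 (pd1 w))) :
    intHalf (fun s t => pd1 (pd1 v) s t * w s t)
      = intHalf (fun s t => v s t * pd1 (pd1 w) s t) := by
  have hI1 : MeasureTheory.Integrable (F2 (fun s t => pd1 (pd1 v) s t * w s t)) HM := by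
    refine integrable_dec ?_ ?_
    · exact (hv.pd1.pd1.cont).mul (hw.cont)
    · exact dv11.mul (dw0.of_le (Nat.zero_le 4))
  have hI2 : MeasureTheory.Integrable (F2 (fun s t => v s t * pd1 (pd1 w) s t)) HM := by
    refine integrable_dec ?_ ?_
    · exact (hv.cont).mul (hw.pd1.pd1.cont)
    · exact dv0.mul (dw11.of_le (Nat.zero_le 4))
  have hI1' : MeasureTheory.Integrable (F2 (fun s t => pd1 (pd1 v) s t * w s t))
      ((volume : Measure ℝ).prod ((volume : Measure ℝ).restrict (Set.Ioi 0))) := hI1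
  have hI2' : MeasureTheory.Integrable (F2 (fun s t => v s t * pd1 (pd1 w) s t))
      ((volume : Measure ℝ).prod ((volume : Measure ℝ).restrict (Set.Ioi 0))) := hI2
  rw [intHalf_eq_prod hI1, intHalf_eq_prod hI2]
  show (∫ p, F2 (fun s t => pd1 (pd1 v) s t * w s t) p
      ∂((volume : Measure ℝ).prod ((volume : Measure ℝ).restrict (Set.Ioi 0))))
    = ∫ p, F2 (fun s t => v s t * pd1 (pd1 w) s t) p
      ∂((volume : Measure ℝ).prod ((volume : Measure ℝ).restrict (Set.Ioi 0)))
  rw [MeasureTheory.integral_prod_symm _ hI1', MeasureTheory.integral_prod_symm _ hI2']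
  apply MeasureTheory.integral_congr_ae
  filter_upwards [MeasureTheory.ae_restrict_mem measurableSet_Ioi] with t htpos
  have ht : (0:ℝ) ≤ t := le_of_lt htpos
  set F : ℝ → ℝ := fun s => pd1 v s t * w s t - v s t * pd1 w s t with hF
  set F' : ℝ → ℝ := fun s => pd1 (pd1 v) s t * w s t - v s t * pd1 (pd1 w) s t with hF'
  have hder : ∀ s : ℝ, HasDerivAt F (F' s) s := by
    intro s
    have h1 := ((Sm.hasDerivAt1 hv.pd1 s t).fun_mul (hw.hasDerivAt1 s t)).fun_sub
      ((hv.hasDerivAt1 s t).fun_mul (Sm.hasDerivAt1 hw.pd1 s t))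
    convert h1 using 1
    · rfl
    · rfl
    simp only [hF']
    ring
  have i1 : MeasureTheory.Integrable (fun s => pd1 (pd1 v) s t * w s t) volume := by
    refine integrable_line_s (f := fun s t => pd1 (pd1 v) s t * w s t) ?_ ?_ ht
    · exact (Sm.cont_slice_s hv.pd1.pd1 t).mul (hw.cont_slice_s t)
    · exact dv11.mul (dw0.of_le (Nat.zero_le 4))
  have i2 : MeasureTheory.Integrable (fun s => v s t * pd1 (pd1 w) s t) volume := by
    refine integrable_line_s (f := fun s t => v s t * pd1 (pd1 w) s t) ?_ ?_ ht
    · exact (hv.cont_slice_s t).mul (Sm.cont_slice_s hw.pd1.pd1 t)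
    · exact dv0.mul (dw11.of_le (Nat.zero_le 4))
  have hzero : ∫ s : ℝ, F' s = 0 := by
    have hbot : Filter.Tendsto F Filter.atBot (nhds 0) := by
      have h1 := (tendsto_line_abs (f := fun s t => pd1 v s t) dv1 ht
        tendsto_abs_atBot_atTop).mul
        (tendsto_line_abs (f := fun s t => w s t) dw0 ht tendsto_abs_atBot_atTop)
      have h2 := (tendsto_line_abs (f := fun s t => v s t) dv0 ht
        tendsto_abs_atBot_atTop).mul
        (tendsto_line_abs (f := fun s t => pd1 w s t) dw1 ht tendsto_abs_atBot_atTop)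
      have := h1.sub h2
      simpa using this
    have htop : Filter.Tendsto F Filter.atTop (nhds 0) := by
      have h1 := (tendsto_line_abs (f := fun s t => pd1 v s t) dv1 ht
        tendsto_abs_atTop_atTop).mul
        (tendsto_line_abs (f := fun s t => w s t) dw0 ht tendsto_abs_atTop_atTop)
      have h2 := (tendsto_line_abs (f := fun s t => v s t) dv0 ht
        tendsto_abs_atTop_atTop).mul
        (tendsto_line_abs (f := fun s t => pd1 w s t) dw1 ht tendsto_abs_atTop_atTop)
      have := h1.sub h2
      simpa using this
    have := MeasureTheory.integral_of_hasDerivAt_of_tendsto hder (i1.sub i2) hbot htop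
    simpa using this
  show (∫ s : ℝ, pd1 (pd1 v) s t * w s t) = ∫ s : ℝ, v s t * pd1 (pd1 w) s t
  have hsub := MeasureTheory.integral_sub i1 i2
  rw [hsub] at hzero
  linarith

/-! ### The class of nice functions and the full Green identity -/

structure Nice (v : ℝ → ℝ → ℝ) : Prop where
  sm : Sm v
  d0 : DecN 6 v
  d1 : DecN 6 (pd1 v)
  d2 : DecN 6 (pd2 v)
  d11 : DecN 6 (pd1 (pd1 v))
  d22 : DecN 6 (pd2 (pd2 v))
  neu : ∀ s : ℝ, pd2 v s 0 = 0

lemma DecN.congr {f g : ℝ → ℝ → ℝ} {n : ℕ} (hf : DecN n f) (h : ∀ s t : ℝ, g s t = f s t) :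
    DecN n g := by
  obtain ⟨C, h0, hb⟩ := hf
  exact ⟨C, h0, fun s t ht => by rw [h s t]; exact hb s t ht⟩

lemma contV (θ : ℝ) : Continuous (fun p : ℝ × ℝ => Vpot θ p.1 p.2) := by
  unfold Vpot
  exact (continuous_snd.mul continuous_const).sub (continuous_fst.mul continuous_const)

lemma decN_Vsq_mul {θ : ℝ} {v w : ℝ → ℝ → ℝ} (hv : DecN 6 v) (hw : DecN 6 w) :
    DecN 4 (fun s t => Vpot θ s t ^ 2 * v s t * w s t) := by
  have h0 : DecN 6 (fun s t => v s t * w s t) := hv.mul (hw.of_le (Nat.zero_le 6))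
  have h1 : DecN 5 (fun s t => Vpot θ s t * (v s t * w s t)) :=
    (h0.of_le (by norm_num)).mul_weight (fun s t ht => abs_V_le_weight θ s t ht)
  have h2 : DecN 4 (fun s t => Vpot θ s t * (Vpot θ s t * (v s t * w s t))) :=
    h1.mul_weight (fun s t ht => abs_V_le_weight θ s t ht)
  exact h2.congr (fun s t => by ring)

lemma Nice.int_mul {v w : ℝ → ℝ → ℝ} (hvc : Sm v) (hwc : Sm w)
    (hv : DecN 6 v) (hw : DecN 6 w) :
    MeasureTheory.Integrable (F2 (fun s t => v s t * w s t)) HM :=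
  integrable_dec (hvc.cont.mul hwc.cont) ((hv.mul (hw.of_le (Nat.zero_le 6))).of_le (by norm_num))

lemma green {θ : ℝ} {v w : ℝ → ℝ → ℝ} (hv : Nice v) (hw : Nice w) :
    intHalf (fun s t => Hop θ v s t * w s t) = intHalf (fun s t => v s t * Hop θ w s t) := by
  have hVc : Continuous (F2 (fun s t => Vpot θ s t ^ 2 * v s t * w s t)) :=
    (((contV θ).pow 2).mul hv.sm.cont).mul hw.sm.cont
  have hVd : DecN 4 (fun s t => Vpot θ s t ^ 2 * v s t * w s t) := decN_Vsq_mul hv.d0 hw.d0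
  have hIV : MeasureTheory.Integrable (F2 (fun s t => Vpot θ s t ^ 2 * v s t * w s t)) HM :=
    integrable_dec hVc hVd
  have hI11v : MeasureTheory.Integrable (F2 (fun s t => pd1 (pd1 v) s t * w s t)) HM :=
    Nice.int_mul hv.sm.pd1.pd1 hw.sm hv.d11 hw.d0
  have hI22v : MeasureTheory.Integrable (F2 (fun s t => pd2 (pd2 v) s t * w s t)) HM :=
    Nice.int_mul hv.sm.pd2.pd2 hw.sm hv.d22 hw.d0
  have hI11w : MeasureTheory.Integrable (F2 (fun s t => v s t * pd1 (pd1 w) s t)) HM :=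
    Nice.int_mul hv.sm hw.sm.pd1.pd1 hv.d0 hw.d11
  have hI22w : MeasureTheory.Integrable (F2 (fun s t => v s t * pd2 (pd2 w) s t)) HM :=
    Nice.int_mul hv.sm hw.sm.pd2.pd2 hv.d0 hw.d22
  have e1 : (fun s t => Hop θ v s t * w s t) = fun s t =>
      (Vpot θ s t ^ 2 * v s t * w s t - pd1 (pd1 v) s t * w s t) - pd2 (pd2 v) s t * w s t := by
    funext s t; unfold Hop; ring
  have e2 : (fun s t => v s t * Hop θ w s t) = fun s t =>
      (Vpot θ s t ^ 2 * v s t * w s t - v s t * pd1 (pd1 w) s t) - v s t * pd2 (pd2 w) s t := by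
    funext s t; unfold Hop; ring
  have hsub1 : MeasureTheory.Integrable
      (F2 (fun s t => Vpot θ s t ^ 2 * v s t * w s t - pd1 (pd1 v) s t * w s t)) HM :=
    hIV.sub hI11v
  have hsub2 : MeasureTheory.Integrable
      (F2 (fun s t => Vpot θ s t ^ 2 * v s t * w s t - v s t * pd1 (pd1 w) s t)) HM :=
    hIV.sub hI11w
  rw [e1, e2]
  rw [intHalf_sub hsub1 hI22v, intHalf_sub hIV hI11v,
    intHalf_sub hsub2 hI22w, intHalf_sub hIV hI11w]
  rw [green_s hv.sm hw.sm (hv.d0.of_le (by norm_num)) (hv.d1.of_le (by norm_num))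
    (hv.d11.of_le (by norm_num)) (hw.d0.of_le (by norm_num)) (hw.d1.of_le (by norm_num))
    (hw.d11.of_le (by norm_num)),
    green_t hv.sm hw.sm (hv.d0.of_le (by norm_num)) (hv.d2.of_le (by norm_num))
    (hv.d22.of_le (by norm_num)) (hw.d0.of_le (by norm_num)) (hw.d2.of_le (by norm_num))
    (hw.d22.of_le (by norm_num)) hv.neu hw.neu]

/-! ### Nice instances -/

lemma SchwartzHalf.d0 {f : ℝ → ℝ → ℝ} (hf : SchwartzHalf f) (n : ℕ) : DecN n f := by
  have := hf.decN 0 0 n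
  simpa using this

lemma SchwartzHalf.d1 {f : ℝ → ℝ → ℝ} (hf : SchwartzHalf f) (n : ℕ) : DecN n (pd1 f) := by
  have := hf.decN 1 0 n
  simpa using this

lemma SchwartzHalf.d2 {f : ℝ → ℝ → ℝ} (hf : SchwartzHalf f) (n : ℕ) : DecN n (pd2 f) := by
  have := hf.decN 0 1 n
  simpa using this

lemma SchwartzHalf.d11 {f : ℝ → ℝ → ℝ} (hf : SchwartzHalf f) (n : ℕ) :
    DecN n (pd1 (pd1 f)) := by
  have := hf.decN 2 0 n
  simpa [Function.iterate_succ_apply'] using this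

lemma SchwartzHalf.d22 {f : ℝ → ℝ → ℝ} (hf : SchwartzHalf f) (n : ℕ) :
    DecN n (pd2 (pd2 f)) := by
  have := hf.decN 0 2 n
  simpa [Function.iterate_succ_apply'] using this

lemma SchwartzHalf.d12 {f : ℝ → ℝ → ℝ} (hf : SchwartzHalf f) (n : ℕ) :
    DecN n (pd1 (pd2 f)) := by
  have := hf.decN 1 1 n
  simpa using this

lemma SchwartzHalf.d111 {f : ℝ → ℝ → ℝ} (hf : SchwartzHalf f) (n : ℕ) :
    DecN n (pd1 (pd1 (pd1 f))) := by
  have := hf.decN 3 0 n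
  simpa [Function.iterate_succ_apply'] using this

lemma SchwartzHalf.d112 {f : ℝ → ℝ → ℝ} (hf : SchwartzHalf f) (n : ℕ) :
    DecN n (pd1 (pd1 (pd2 f))) := by
  have := hf.decN 2 1 n
  simpa [Function.iterate_succ_apply'] using this

lemma SchwartzHalf.d122 {f : ℝ → ℝ → ℝ} (hf : SchwartzHalf f) (n : ℕ) :
    DecN n (pd1 (pd2 (pd2 f))) := by
  have := hf.decN 1 2 n
  simpa [Function.iterate_succ_apply'] using this

lemma SchwartzHalf.d222 {f : ℝ → ℝ → ℝ} (hf : SchwartzHalf f) (n : ℕ) :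
    DecN n (pd2 (pd2 (pd2 f))) := by
  have := hf.decN 0 3 n
  simpa [Function.iterate_succ_apply'] using this

lemma IsModelEigen.sm {θ σv : ℝ} {U : ℝ → ℝ → ℝ} (me : IsModelEigen θ U σv) : Sm U := me.smooth

lemma IsModelEigen.nice {θ σv : ℝ} {U : ℝ → ℝ → ℝ} (me : IsModelEigen θ U σv) : Nice U :=
  ⟨me.smooth, me.schwartz.d0 6, me.schwartz.d1 6, me.schwartz.d2 6, me.schwartz.d11 6,
    me.schwartz.d22 6, me.neumann⟩

lemma schwartz_pdθ {a b : ℝ} {u : ℝ → ℝ → ℝ → ℝ} {σ : ℝ → ℝ} (h : IsSmoothFamily a b u σ)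
    {θ : ℝ} (hθ : θ ∈ Set.Ioo a b) : SchwartzHalf (pdθ u θ) := by
  intro k l n
  obtain ⟨ε, hε, C, hC⟩ := h.schwartz θ hθ 1 k l n
  refine ⟨C, fun s t ht => ?_⟩
  have := hC θ hθ (by simpa using hε) s t ht
  simpa using this

lemma nice_pdθ {a b : ℝ} {u : ℝ → ℝ → ℝ → ℝ} {σ : ℝ → ℝ} (h : IsSmoothFamily a b u σ)
    {θ : ℝ} (hθ : θ ∈ Set.Ioo a b) : Nice (pdθ u θ) :=
  ⟨sm_pdθ h hθ, (schwartz_pdθ h hθ).d0 6, (schwartz_pdθ h hθ).d1 6, (schwartz_pdθ h hθ).d2 6,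
    (schwartz_pdθ h hθ).d11 6, (schwartz_pdθ h hθ).d22 6, neumann_pdθ h hθ⟩

/-! ### Differentiating the eigenvalue equation in θ -/

section FH

variable {a b : ℝ} {u : ℝ → ℝ → ℝ → ℝ} {σ : ℝ → ℝ} {θ : ℝ}

lemma hasDerivAt_sigma (h : IsSmoothFamily a b u σ) (hθ : θ ∈ Set.Ioo a b) :
    HasDerivAt σ (deriv σ θ) θ := by
  have h1 : ContDiffAt ℝ 1 σ θ := (h.sigma_smooth 1).contDiffAt (Ioo_mem_nhds hθ.1 hθ.2)
  exact (h1.differentiableAt one_ne_zero).hasDerivAt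

lemma hasDerivAt_Vθ (s t : ℝ) :
    HasDerivAt (fun θ' => Vpot θ' s t) (t * (-Real.sin θ) - s * Real.cos θ) θ := by
  have h1 : HasDerivAt (fun θ' => t * Real.cos θ') (t * (-Real.sin θ)) θ :=
    (Real.hasDerivAt_cos θ).const_mul t
  have h2 : HasDerivAt (fun θ' => s * Real.sin θ') (s * Real.cos θ) θ :=
    (Real.hasDerivAt_sin θ).const_mul s
  exact h1.sub h2

lemma FH_pointwise (h : IsSmoothFamily a b u σ) (hθ : θ ∈ Set.Ioo a b) (s t : ℝ) (ht : 0 ≤ t) :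
    Hop θ (pdθ u θ) s t = deriv σ θ * u θ s t + σ θ * pdθ u θ s t
      - 2 * Vpot θ s t * (t * (-Real.sin θ) - s * Real.cos θ) * u θ s t := by
  set U := u θ with hU
  set ud := pdθ u θ with hud
  -- derivative of the left side of the eigenvalue equation
  have hV2 : HasDerivAt (fun θ' => Vpot θ' s t ^ 2)
      (2 * Vpot θ s t ^ 1 * (t * (-Real.sin θ) - s * Real.cos θ)) θ := by
    simpa using (hasDerivAt_Vθ (θ := θ) s t).fun_pow 2
  have hu := hasDerivAt_pdθ h hθ s t
  have h11 := hasDerivAt_pd11_param h hθ s t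
  have h22 := hasDerivAt_pd22_param h hθ s t
  have hL : HasDerivAt (fun θ' => Hop θ' (u θ') s t)
      (- pd1 (pd1 ud) s t - pd2 (pd2 ud) s t
        + (2 * Vpot θ s t ^ 1 * (t * (-Real.sin θ) - s * Real.cos θ) * U s t
          + Vpot θ s t ^ 2 * ud s t)) θ :=
    (h11.neg.sub h22).add (hV2.mul hu)
  have hR : HasDerivAt (fun θ' => σ θ' * u θ' s t)
      (deriv σ θ * U s t + σ θ * ud s t) θ := (hasDerivAt_sigma h hθ).mul hu
  have heq : HasDerivAt (fun θ' => σ θ' * u θ' s t)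
      (- pd1 (pd1 ud) s t - pd2 (pd2 ud) s t
        + (2 * Vpot θ s t ^ 1 * (t * (-Real.sin θ) - s * Real.cos θ) * U s t
          + Vpot θ s t ^ 2 * ud s t)) θ := by
    refine hL.congr_of_eventuallyEq ?_
    filter_upwards [Ioo_mem_nhds hθ.1 hθ.2] with θ' hθ'
    exact ((h.eigen θ' hθ').eigen s t ht).symm
  have huni := heq.unique hR
  show - pd1 (pd1 ud) s t - pd2 (pd2 ud) s t + Vpot θ s t ^ 2 * ud s t = _
  linear_combination huni

end FH

/-! ### The virial multiplier -/

section Virial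

/-- The multiplier `A = s ∂_s U + t ∂_t U`. -/
def Afun (U : ℝ → ℝ → ℝ) : ℝ → ℝ → ℝ := fun s t => s * pd1 U s t + t * pd2 U s t

variable {θ σv : ℝ} {U : ℝ → ℝ → ℝ}

lemma DecN.mul_s {f : ℝ → ℝ → ℝ} {n : ℕ} (hf : DecN (n+1) f) :
    DecN n (fun s t => s * f s t) :=
  hf.mul_weight (g := fun s _ => s) abs_s_le_weight

lemma DecN.mul_t {f : ℝ → ℝ → ℝ} {n : ℕ} (hf : DecN (n+1) f) :
    DecN n (fun s t => t * f s t) :=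
  hf.mul_weight (g := fun _ t => t) abs_t_le_weight

lemma Sm.afun (hU : Sm U) : Sm (Afun U) := by
  intro n
  have e : F2 (Afun U) = fun p : ℝ × ℝ => p.1 * F2 (_root_.pd1 U) p + p.2 * F2 (_root_.pd2 U) p := rfl
  rw [e]
  exact (contDiff_fst.mul (hU.pd1 n)).add (contDiff_snd.mul (hU.pd2 n))

lemma va1 (hU : Sm U) : pd1 (Afun U) =
    fun s t => pd1 U s t + s * pd1 (pd1 U) s t + t * pd1 (pd2 U) s t := by
  funext s t
  have H : HasDerivAt (fun x => x * pd1 U x t + t * pd2 U x t)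
      (1 * pd1 U s t + s * pd1 (pd1 U) s t + t * pd1 (pd2 U) s t) s :=
    ((hasDerivAt_id s).mul (Sm.hasDerivAt1 hU.pd1 s t)).add
      ((Sm.hasDerivAt1 hU.pd2 s t).const_mul t)
  show deriv (fun x => x * pd1 U x t + t * pd2 U x t) s = _
  rw [H.deriv]; ring

lemma va11 (hU : Sm U) : pd1 (pd1 (Afun U)) =
    fun s t => 2 * pd1 (pd1 U) s t + s * pd1 (pd1 (pd1 U)) s t + t * pd1 (pd1 (pd2 U)) s t := by
  funext s t
  show deriv (fun x => pd1 (Afun U) x t) s = _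
  simp only [va1 hU]
  have H : HasDerivAt (fun x => pd1 U x t + x * pd1 (pd1 U) x t + t * pd1 (pd2 U) x t)
      (pd1 (pd1 U) s t + (1 * pd1 (pd1 U) s t + s * pd1 (pd1 (pd1 U)) s t)
        + t * pd1 (pd1 (pd2 U)) s t) s :=
    ((Sm.hasDerivAt1 hU.pd1 s t).add
      ((hasDerivAt_id s).mul (Sm.hasDerivAt1 hU.pd1.pd1 s t))).add
      ((Sm.hasDerivAt1 hU.pd2.pd1 s t).const_mul t)
  rw [H.deriv]; ring

lemma va2 (hU : Sm U) : pd2 (Afun U) =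
    fun s t => s * pd2 (pd1 U) s t + pd2 U s t + t * pd2 (pd2 U) s t := by
  funext s t
  have H : HasDerivAt (fun y => s * pd1 U s y + y * pd2 U s y)
      (s * pd2 (pd1 U) s t + (1 * pd2 U s t + t * pd2 (pd2 U) s t)) t :=
    ((Sm.hasDerivAt2 hU.pd1 s t).const_mul s).add
      ((hasDerivAt_id t).mul (Sm.hasDerivAt2 hU.pd2 s t))
  show deriv (fun y => s * pd1 U s y + y * pd2 U s y) t = _
  rw [H.deriv]; ring

lemma va22 (hU : Sm U) : pd2 (pd2 (Afun U)) =
    fun s t => s * pd2 (pd2 (pd1 U)) s t + 2 * pd2 (pd2 U) s t + t * pd2 (pd2 (pd2 U)) s t := by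
  funext s t
  show deriv (fun y => pd2 (Afun U) s y) t = _
  simp only [va2 hU]
  have H : HasDerivAt (fun y => s * pd2 (pd1 U) s y + pd2 U s y + y * pd2 (pd2 U) s y)
      (s * pd2 (pd2 (pd1 U)) s t + pd2 (pd2 U) s t
        + (1 * pd2 (pd2 U) s t + t * pd2 (pd2 (pd2 U)) s t)) t :=
    (((Sm.hasDerivAt2 hU.pd1.pd2 s t).const_mul s).add
      (Sm.hasDerivAt2 hU.pd2 s t)).add
      ((hasDerivAt_id t).mul (Sm.hasDerivAt2 hU.pd2.pd2 s t))
  rw [H.deriv]; ring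

lemma sw1 (hU : Sm U) : pd2 (pd1 U) = pd1 (pd2 U) := (pd_comm hU).symm

lemma sw2 (hU : Sm U) : pd2 (pd2 (pd1 U)) = pd1 (pd2 (pd2 U)) := by
  rw [sw1 hU]
  exact (pd_comm hU.pd2).symm

lemma sw3 (hU : Sm U) : pd1 (pd1 (pd2 U)) = pd2 (pd1 (pd1 U)) := by
  rw [pd_comm hU]
  exact pd_comm hU.pd1

lemma neumann_afun (me : IsModelEigen θ U σv) (s : ℝ) : pd2 (Afun U) s 0 = 0 := by
  have hU : Sm U := me.smooth
  have e := congrFun (congrFun (va2 hU) s) 0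
  have h1 : pd2 (pd1 U) s 0 = 0 := by
    rw [sw1 hU]
    show deriv (fun x => pd2 U x 0) s = 0
    rw [show (fun x => pd2 U x 0) = (fun _ : ℝ => (0:ℝ)) from funext me.neumann]
    simp
  rw [e, h1, me.neumann s]
  ring

lemma nice_afun (me : IsModelEigen θ U σv) : Nice (Afun U) := by
  have hU : Sm U := me.smooth
  have S := me.schwartz
  refine ⟨hU.afun, ?_, ?_, ?_, ?_, ?_, neumann_afun me⟩
  · exact ((S.d1 7).mul_s).add ((S.d2 7).mul_t)
  · rw [va1 hU]
    exact ((S.d1 6).add ((S.d11 7).mul_s)).add ((S.d12 7).mul_t)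
  · rw [va2 hU, sw1 hU]
    exact (((S.d12 7).mul_s).add (S.d2 6)).add ((S.d22 7).mul_t)
  · rw [va11 hU]
    exact (((S.d11 6).const_mul 2).add ((S.d111 7).mul_s)).add ((S.d112 7).mul_t)
  · rw [va22 hU, sw2 hU]
    exact (((S.d122 7).mul_s).add ((S.d22 6).const_mul 2)).add ((S.d222 7).mul_t)

lemma eigen_sum (me : IsModelEigen θ U σv) (s t : ℝ) (ht : 0 ≤ t) :
    pd1 (pd1 U) s t + pd2 (pd2 U) s t = Vpot θ s t ^ 2 * U s t - σv * U s t := by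
  have := me.eigen s t ht
  unfold Hop at this
  linarith

/-- The commutator identity `H(Au) = σ Au + 2σ u − 4V² u` pointwise for `t > 0`. -/
lemma virial_pointwise (me : IsModelEigen θ U σv) (s t : ℝ) (ht : 0 < t) :
    Hop θ (Afun U) s t
      = σv * Afun U s t + 2 * σv * U s t - 4 * Vpot θ s t ^ 2 * U s t := by
  have hU : Sm U := me.smooth
  -- s-derivative of the eigenvalue identity
  have hfun_s : (fun x => pd1 (pd1 U) x t + pd2 (pd2 U) x t)
      = (fun x => Vpot θ x t ^ 2 * U x t - σv * U x t) :=
    funext fun x => eigen_sum me x t ht.le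
  have HLs : HasDerivAt (fun x => pd1 (pd1 U) x t + pd2 (pd2 U) x t)
      (pd1 (pd1 (pd1 U)) s t + pd1 (pd2 (pd2 U)) s t) s :=
    (Sm.hasDerivAt1 hU.pd1.pd1 s t).add (Sm.hasDerivAt1 hU.pd2.pd2 s t)
  have hVx : HasDerivAt (fun x => Vpot θ x t) (-Real.sin θ) s := by
    show HasDerivAt (fun x => t * Real.cos θ - x * Real.sin θ) (-Real.sin θ) s
    have h' := (hasDerivAt_const s (t * Real.cos θ)).fun_sub
      ((hasDerivAt_id s).mul_const (Real.sin θ))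
    simpa using h'
  have hVx2 : HasDerivAt (fun x => Vpot θ x t ^ 2)
      (2 * Vpot θ s t ^ 1 * (-Real.sin θ)) s := by
    simpa using hVx.fun_pow 2
  have HRs : HasDerivAt (fun x => Vpot θ x t ^ 2 * U x t - σv * U x t)
      (2 * Vpot θ s t ^ 1 * (-Real.sin θ) * U s t + Vpot θ s t ^ 2 * pd1 U s t
        - σv * pd1 U s t) s :=
    (hVx2.mul (Sm.hasDerivAt1 hU s t)).sub ((Sm.hasDerivAt1 hU s t).const_mul σv)
  have hs_eq : pd1 (pd1 (pd1 U)) s t + pd1 (pd2 (pd2 U)) s t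
      = 2 * Vpot θ s t ^ 1 * (-Real.sin θ) * U s t + Vpot θ s t ^ 2 * pd1 U s t
        - σv * pd1 U s t := by
    rw [hfun_s] at HLs
    exact HLs.unique HRs
  -- t-derivative of the eigenvalue identity
  have HLt : HasDerivAt (fun y => pd1 (pd1 U) s y + pd2 (pd2 U) s y)
      (pd2 (pd1 (pd1 U)) s t + pd2 (pd2 (pd2 U)) s t) t :=
    (Sm.hasDerivAt2 hU.pd1.pd1 s t).add (Sm.hasDerivAt2 hU.pd2.pd2 s t)
  have hVy : HasDerivAt (fun y => Vpot θ s y) (Real.cos θ) t := by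
    show HasDerivAt (fun y => y * Real.cos θ - s * Real.sin θ) (Real.cos θ) t
    have h' := ((hasDerivAt_id t).mul_const (Real.cos θ)).fun_sub
      (hasDerivAt_const t (s * Real.sin θ))
    simpa using h'
  have hVy2 : HasDerivAt (fun y => Vpot θ s y ^ 2)
      (2 * Vpot θ s t ^ 1 * Real.cos θ) t := by
    simpa using hVy.fun_pow 2
  have HRt : HasDerivAt (fun y => Vpot θ s y ^ 2 * U s y - σv * U s y)
      (2 * Vpot θ s t ^ 1 * Real.cos θ * U s t + Vpot θ s t ^ 2 * pd2 U s t
        - σv * pd2 U s t) t :=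
    (hVy2.mul (Sm.hasDerivAt2 hU s t)).sub ((Sm.hasDerivAt2 hU s t).const_mul σv)
  have HLt' : HasDerivAt (fun y => Vpot θ s y ^ 2 * U s y - σv * U s y)
      (pd2 (pd1 (pd1 U)) s t + pd2 (pd2 (pd2 U)) s t) t := by
    refine HLt.congr_of_eventuallyEq ?_
    filter_upwards [Ioi_mem_nhds ht] with y hy
    exact (eigen_sum me s y (le_of_lt hy)).symm
  have ht_eq : pd2 (pd1 (pd1 U)) s t + pd2 (pd2 (pd2 U)) s t
      = 2 * Vpot θ s t ^ 1 * Real.cos θ * U s t + Vpot θ s t ^ 2 * pd2 U s t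
        - σv * pd2 U s t := HLt'.unique HRt
  have hE0 := eigen_sum me s t ht.le
  have hVdef : Vpot θ s t = t * Real.cos θ - s * Real.sin θ := rfl
  have e11 := congrFun (congrFun (va11 hU) s) t
  have e22 := congrFun (congrFun (va22 hU) s) t
  have sw2' := congrFun (congrFun (sw2 hU) s) t
  have sw3' := congrFun (congrFun (sw3 hU) s) t
  have hA : Afun U s t = s * pd1 U s t + t * pd2 U s t := rfl
  show - pd1 (pd1 (Afun U)) s t - pd2 (pd2 (Afun U)) s t
      + Vpot θ s t ^ 2 * Afun U s t = _
  rw [e11, e22, sw2', sw3', hA]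
  linear_combination (-s) * hs_eq + (-t) * ht_eq - 2 * hE0
    + 2 * Vpot θ s t * U s t * hVdef

end Virial

/-! ### Final assembly -/

section Assembly

variable {a b : ℝ} {u : ℝ → ℝ → ℝ → ℝ} {σ : ℝ → ℝ} {θ : ℝ}

lemma decN_sq {U : ℝ → ℝ → ℝ} (hS : SchwartzHalf U) (n : ℕ) :
    DecN n (fun s t => (U s t)^2) :=
  ((hS.d0 n).mul (hS.d0 0)).congr (fun s t => by ring)

lemma DecN.mul_V (θ : ℝ) {f : ℝ → ℝ → ℝ} {n : ℕ} (hf : DecN (n+1) f) :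
    DecN n (fun s t => Vpot θ s t * f s t) :=
  hf.mul_weight (fun s t ht => abs_V_le_weight θ s t ht)

lemma integrable_comb (h : IsSmoothFamily a b u σ) (hθ : θ ∈ Set.Ioo a b) :
    MeasureTheory.Integrable (F2 (fun s t => (u θ s t)^2)) HM ∧
    MeasureTheory.Integrable (F2 (fun s t => pdθ u θ s t * u θ s t)) HM ∧
    MeasureTheory.Integrable (F2 (fun s t => t * Vpot θ s t * (u θ s t)^2)) HM ∧
    MeasureTheory.Integrable (F2 (fun s t => s * Vpot θ s t * (u θ s t)^2)) HM ∧
    MeasureTheory.Integrable (F2 (fun s t => Vpot θ s t ^ 2 * (u θ s t)^2)) HM ∧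
    MeasureTheory.Integrable (F2 (fun s t => Afun (u θ) s t * u θ s t)) HM := by
  have me := h.eigen θ hθ
  have S := me.schwartz
  have hUc : Continuous (F2 (u θ)) := me.sm.cont
  have hVc := contV θ
  refine ⟨?_, ?_, ?_, ?_, ?_, ?_⟩
  · exact integrable_dec (hUc.pow 2) ((decN_sq S 4))
  · exact Nice.int_mul (sm_pdθ h hθ) me.sm ((schwartz_pdθ h hθ).d0 6) (S.d0 6)
  · refine integrable_dec ?_ ?_
    · exact (continuous_snd.mul hVc).mul (hUc.pow 2)
    · have h6 : DecN 6 (fun s t => (u θ s t)^2) := decN_sq S 6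
      have h5 : DecN 5 (fun s t => Vpot θ s t * (u θ s t)^2) := h6.mul_V θ
      have h4 : DecN 4 (fun s t => t * (Vpot θ s t * (u θ s t)^2)) := h5.mul_t
      exact h4.congr (fun s t => by ring)
  · refine integrable_dec ?_ ?_
    · exact (continuous_fst.mul hVc).mul (hUc.pow 2)
    · have h6 : DecN 6 (fun s t => (u θ s t)^2) := decN_sq S 6
      have h5 : DecN 5 (fun s t => Vpot θ s t * (u θ s t)^2) := h6.mul_V θ
      have h4 : DecN 4 (fun s t => s * (Vpot θ s t * (u θ s t)^2)) := h5.mul_s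
      exact h4.congr (fun s t => by ring)
  · refine integrable_dec ?_ ?_
    · exact ((hVc.pow 2)).mul (hUc.pow 2)
    · have h6 : DecN 6 (fun s t => (u θ s t)^2) := decN_sq S 6
      have h5 : DecN 5 (fun s t => Vpot θ s t * (u θ s t)^2) := h6.mul_V θ
      have h4 : DecN 4 (fun s t => Vpot θ s t * (Vpot θ s t * (u θ s t)^2)) := h5.mul_V θ
      exact h4.congr (fun s t => by ring)
  · exact Nice.int_mul (me.sm.afun) me.sm (nice_afun me).d0 (S.d0 6)

/-- The virial identity: `∫ V² u² = σ/2`. -/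
lemma virial_integral (h : IsSmoothFamily a b u σ) (hθ : θ ∈ Set.Ioo a b) :
    intHalf (fun s t => Vpot θ s t ^ 2 * (u θ s t)^2) = σ θ / 2 := by
  have me := h.eigen θ hθ
  obtain ⟨IU2, IudU, ItVU2, IsVU2, IV2U2, IAU⟩ := integrable_comb h hθ
  have hG := green (θ := θ) (nice_afun me) me.nice
  have hR : intHalf (fun s t => Afun (u θ) s t * Hop θ (u θ) s t)
      = σ θ * intHalf (fun s t => Afun (u θ) s t * u θ s t) := by
    rw [intHalf_congr (g := fun s t => σ θ * (Afun (u θ) s t * u θ s t))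
      (fun s t ht => by rw [me.eigen s t ht.le]; ring)]
    exact intHalf_const_mul _
  have hL : intHalf (fun s t => Hop θ (Afun (u θ)) s t * u θ s t)
      = σ θ * intHalf (fun s t => Afun (u θ) s t * u θ s t)
        + 2 * σ θ * 1 - 4 * intHalf (fun s t => Vpot θ s t ^ 2 * (u θ s t)^2) := by
    rw [intHalf_congr (g := fun s t =>
        (σ θ * (Afun (u θ) s t * u θ s t) + (2 * σ θ) * (u θ s t)^2)
          - 4 * (Vpot θ s t ^ 2 * (u θ s t)^2))
      (fun s t ht => by rw [virial_pointwise me s t ht]; ring)]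
    have J1 : MeasureTheory.Integrable
        (F2 (fun s t => σ θ * (Afun (u θ) s t * u θ s t))) HM := IAU.const_mul (σ θ)
    have J2 : MeasureTheory.Integrable
        (F2 (fun s t => (2 * σ θ) * (u θ s t)^2)) HM := IU2.const_mul (2 * σ θ)
    have J3 : MeasureTheory.Integrable
        (F2 (fun s t => 4 * (Vpot θ s t ^ 2 * (u θ s t)^2))) HM := IV2U2.const_mul 4
    have J12 : MeasureTheory.Integrable
        (F2 (fun s t => σ θ * (Afun (u θ) s t * u θ s t) + (2 * σ θ) * (u θ s t)^2)) HM :=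
      J1.add J2
    rw [intHalf_sub J12 J3]
    rw [intHalf_add J1 J2]
    rw [intHalf_const_mul, intHalf_const_mul, intHalf_const_mul, me.normalized]
  rw [hL, hR] at hG
  linarith

/-- The Feynman–Hellmann identity. -/
lemma FH_integral (h : IsSmoothFamily a b u σ) (hθ : θ ∈ Set.Ioo a b) :
    (-2 * Real.sin θ) * intHalf (fun s t => t * Vpot θ s t * (u θ s t)^2)
      + (-2 * Real.cos θ) * intHalf (fun s t => s * Vpot θ s t * (u θ s t)^2)
      = deriv σ θ := by
  have me := h.eigen θ hθ
  obtain ⟨IU2, IudU, ItVU2, IsVU2, IV2U2, IAU⟩ := integrable_comb h hθ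
  have hG := green (θ := θ) (nice_pdθ h hθ) me.nice
  have hR : intHalf (fun s t => pdθ u θ s t * Hop θ (u θ) s t)
      = σ θ * intHalf (fun s t => pdθ u θ s t * u θ s t) := by
    rw [intHalf_congr (g := fun s t => σ θ * (pdθ u θ s t * u θ s t))
      (fun s t ht => by rw [me.eigen s t ht.le]; ring)]
    exact intHalf_const_mul _
  have hL : intHalf (fun s t => Hop θ (pdθ u θ) s t * u θ s t)
      = (deriv σ θ * 1 + σ θ * intHalf (fun s t => pdθ u θ s t * u θ s t))
        - ((-2 * Real.sin θ) * intHalf (fun s t => t * Vpot θ s t * (u θ s t)^2)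
          + (-2 * Real.cos θ) * intHalf (fun s t => s * Vpot θ s t * (u θ s t)^2)) := by
    rw [intHalf_congr (g := fun s t =>
        (deriv σ θ * (u θ s t)^2 + σ θ * (pdθ u θ s t * u θ s t))
          - ((-2 * Real.sin θ) * (t * Vpot θ s t * (u θ s t)^2)
            + (-2 * Real.cos θ) * (s * Vpot θ s t * (u θ s t)^2)))
      (fun s t ht => by rw [FH_pointwise h hθ s t ht.le]; ring)]
    have J1 : MeasureTheory.Integrable
        (F2 (fun s t => deriv σ θ * (u θ s t)^2)) HM := IU2.const_mul (deriv σ θ)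
    have J2 : MeasureTheory.Integrable
        (F2 (fun s t => σ θ * (pdθ u θ s t * u θ s t))) HM := IudU.const_mul (σ θ)
    have J3 : MeasureTheory.Integrable
        (F2 (fun s t => (-2 * Real.sin θ) * (t * Vpot θ s t * (u θ s t)^2))) HM :=
      ItVU2.const_mul _
    have J4 : MeasureTheory.Integrable
        (F2 (fun s t => (-2 * Real.cos θ) * (s * Vpot θ s t * (u θ s t)^2))) HM :=
      IsVU2.const_mul _
    have J12 : MeasureTheory.Integrable
        (F2 (fun s t => deriv σ θ * (u θ s t)^2 + σ θ * (pdθ u θ s t * u θ s t))) HM :=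
      J1.add J2
    have J34 : MeasureTheory.Integrable
        (F2 (fun s t => (-2 * Real.sin θ) * (t * Vpot θ s t * (u θ s t)^2)
          + (-2 * Real.cos θ) * (s * Vpot θ s t * (u θ s t)^2))) HM := J3.add J4
    rw [intHalf_sub J12 J34]
    rw [intHalf_add J1 J2, intHalf_add J3 J4]
    rw [intHalf_const_mul, intHalf_const_mul, intHalf_const_mul, intHalf_const_mul,
      me.normalized]
  rw [hL, hR] at hG
  linarith

/-- Decomposition of `∫ V² u²`. -/
lemma Vsq_decomp (h : IsSmoothFamily a b u σ) (hθ : θ ∈ Set.Ioo a b) :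
    intHalf (fun s t => Vpot θ s t ^ 2 * (u θ s t)^2)
      = Real.cos θ * intHalf (fun s t => t * Vpot θ s t * (u θ s t)^2)
        - Real.sin θ * intHalf (fun s t => s * Vpot θ s t * (u θ s t)^2) := by
  obtain ⟨IU2, IudU, ItVU2, IsVU2, IV2U2, IAU⟩ := integrable_comb h hθ
  rw [intHalf_congr (g := fun s t =>
      Real.cos θ * (t * Vpot θ s t * (u θ s t)^2)
        - Real.sin θ * (s * Vpot θ s t * (u θ s t)^2))
    (fun s t ht => by
      have hVdef : Vpot θ s t = t * Real.cos θ - s * Real.sin θ := rfl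
      linear_combination (u θ s t)^2 * Vpot θ s t * hVdef)]
  rw [intHalf_sub (ItVU2.const_mul _) (IsVU2.const_mul _), intHalf_const_mul, intHalf_const_mul]

end Assembly

/-- `∫ t V_θ u_θ² = C(θ)/2` and `∫ s V_θ u_θ² = −S(θ)/2`, where
`C(θ) = cos θ σ(θ) − sin θ σ'(θ)` and `S(θ) = sin θ σ(θ) + cos θ σ'(θ)`. -/
theorem tV_sV_identities (a b : ℝ) (u : ℝ → ℝ → ℝ → ℝ) (σ : ℝ → ℝ)
    (h : IsSmoothFamily a b u σ) (θ : ℝ) (hθ : θ ∈ Set.Ioo a b)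
    (Cθ Sθ : ℝ)
    (hC : Cθ = Real.cos θ * σ θ - Real.sin θ * deriv σ θ)
    (hS : Sθ = Real.sin θ * σ θ + Real.cos θ * deriv σ θ) :
    intHalf (fun s t => t * Vpot θ s t * (u θ s t)^2) = Cθ / 2 ∧
    intHalf (fun s t => s * Vpot θ s t * (u θ s t)^2) = - Sθ / 2 := by
  have hvir := virial_integral h hθ
  have hfh := FH_integral h hθ
  have hdec := Vsq_decomp h hθ
  have eq1 : Real.cos θ * intHalf (fun s t => t * Vpot θ s t * (u θ s t)^2)
      - Real.sin θ * intHalf (fun s t => s * Vpot θ s t * (u θ s t)^2) = σ θ / 2 :=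
    hdec.symm.trans hvir
  have pyth := Real.sin_sq_add_cos_sq θ
  constructor
  · rw [hC]
    linear_combination Real.cos θ * eq1 - (Real.sin θ / 2) * hfh
      - intHalf (fun s t => t * Vpot θ s t * (u θ s t)^2) * pyth
  · rw [hS]
    linear_combination (-Real.sin θ) * eq1 - (Real.cos θ / 2) * hfh
      - intHalf (fun s t => s * Vpot θ s t * (u θ s t)^2) * pyth
end
end

section
/- Let θ ∈ (0, π/2) and let u be a model eigenfunction of H(θ) with eigenvalue σ. Then the function f₀ := (2 sin(2θ))⁻¹ (sin²θ · s² u − ∂_s² u) satisfies (H(θ) − σ) f₀ = −t ∂_s u on ℝ²₊. -/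
open Real MeasureTheory Set

noncomputable section

namespace F0Aux

open ContDiff

def Sm (v : ℝ → ℝ → ℝ) : Prop := ContDiff ℝ ∞ (fun p : ℝ × ℝ => v p.1 p.2)

lemma inf_add_one_le : (∞ : WithTop ℕ∞) + 1 ≤ ∞ := by
  norm_num

lemma hasDerivAt_fst {F : ℝ × ℝ → ℝ} {s t : ℝ} (hF : DifferentiableAt ℝ F (s, t)) :
    HasDerivAt (fun x => F (x, t)) (fderiv ℝ F (s, t) (1, 0)) s := by
  have h1 : HasDerivAt (fun x : ℝ => (x, t)) ((1 : ℝ), (0 : ℝ)) s :=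
    (hasDerivAt_id s).prodMk (hasDerivAt_const s t)
  exact (hF.hasFDerivAt.comp_hasDerivAt s h1 :)

lemma hasDerivAt_snd {F : ℝ × ℝ → ℝ} {s t : ℝ} (hF : DifferentiableAt ℝ F (s, t)) :
    HasDerivAt (fun y => F (s, y)) (fderiv ℝ F (s, t) (0, 1)) t := by
  have h1 : HasDerivAt (fun y : ℝ => (s, y)) ((0 : ℝ), (1 : ℝ)) t :=
    (hasDerivAt_const t s).prodMk (hasDerivAt_id t)
  exact (hF.hasFDerivAt.comp_hasDerivAt t h1 :)

lemma Sm.diffAt {v} (h : Sm v) (p : ℝ × ℝ) :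
    DifferentiableAt ℝ (fun p : ℝ × ℝ => v p.1 p.2) p :=
  (h.differentiable (by norm_num)).differentiableAt

lemma Sm.hd1 {v} (h : Sm v) (s t : ℝ) : HasDerivAt (fun x => v x t) (pd1 v s t) s := by
  have h2 := hasDerivAt_fst (h.diffAt (s, t))
  have : pd1 v s t = fderiv ℝ (fun p : ℝ × ℝ => v p.1 p.2) (s, t) (1, 0) := h2.deriv ▸ rfl
  rw [this]; exact h2

lemma Sm.hd2 {v} (h : Sm v) (s t : ℝ) : HasDerivAt (fun y => v s y) (pd2 v s t) t := by
  have h2 := hasDerivAt_snd (h.diffAt (s, t))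
  have : pd2 v s t = fderiv ℝ (fun p : ℝ × ℝ => v p.1 p.2) (s, t) (0, 1) := h2.deriv ▸ rfl
  rw [this]; exact h2

lemma Sm.pd1' {v} (h : Sm v) : Sm (pd1 v) := by
  have hf : ContDiff ℝ ∞ (fun p : ℝ × ℝ =>
      fderiv ℝ (fun p : ℝ × ℝ => v p.1 p.2) p ((1 : ℝ), (0 : ℝ))) :=
    (h.fderiv_right inf_add_one_le).clm_apply contDiff_const
  have he : (fun p : ℝ × ℝ => pd1 v p.1 p.2) = fun p : ℝ × ℝ =>
      fderiv ℝ (fun p : ℝ × ℝ => v p.1 p.2) p ((1 : ℝ), (0 : ℝ)) := by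
    funext p
    obtain ⟨s, t⟩ := p
    exact (hasDerivAt_fst (h.diffAt (s, t))).deriv
  rw [Sm, he]; exact hf

lemma Sm.pd2' {v} (h : Sm v) : Sm (pd2 v) := by
  have hf : ContDiff ℝ ∞ (fun p : ℝ × ℝ =>
      fderiv ℝ (fun p : ℝ × ℝ => v p.1 p.2) p ((0 : ℝ), (1 : ℝ))) :=
    (h.fderiv_right inf_add_one_le).clm_apply contDiff_const
  have he : (fun p : ℝ × ℝ => pd2 v p.1 p.2) = fun p : ℝ × ℝ =>
      fderiv ℝ (fun p : ℝ × ℝ => v p.1 p.2) p ((0 : ℝ), (1 : ℝ)) := by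
    funext p
    obtain ⟨s, t⟩ := p
    exact (hasDerivAt_snd (h.diffAt (s, t))).deriv
  rw [Sm, he]; exact hf

lemma Sm.comm {v} (h : Sm v) : pd1 (pd2 v) = pd2 (pd1 v) := by
  funext s t
  set U : ℝ × ℝ → ℝ := fun p : ℝ × ℝ => v p.1 p.2 with hU
  have hdU : ∀ p, DifferentiableAt ℝ U p := h.diffAt
  have hdF : DifferentiableAt ℝ (fderiv ℝ U) (s, t) :=
    ((h.fderiv_right inf_add_one_le).differentiable (by norm_num)).differentiableAt
  have hsym : IsSymmSndFDerivAt ℝ U (s, t) :=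
    (h.contDiffAt).isSymmSndFDerivAt (by rw [minSmoothness_of_isRCLikeNormedField]; norm_cast)
  have key : ∀ w : ℝ × ℝ, HasFDerivAt (fun p => fderiv ℝ U p w)
      ((ContinuousLinearMap.apply ℝ ℝ w).comp (fderiv ℝ (fderiv ℝ U) (s, t))) (s, t) :=
    fun w => (ContinuousLinearMap.apply ℝ ℝ w).hasFDerivAt.comp (s, t) hdF.hasFDerivAt
  have h1 : pd1 (pd2 v) s t = fderiv ℝ (fderiv ℝ U) (s, t) (1, 0) (0, 1) := by
    have he : (fun x => pd2 v x t) = fun x => fderiv ℝ U (x, t) ((0 : ℝ), (1 : ℝ)) := by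
      funext x; exact (hasDerivAt_snd (hdU (x, t))).deriv
    show deriv (fun x => pd2 v x t) s = _
    rw [he]
    have := hasDerivAt_fst (s := s) (t := t) ((key ((0 : ℝ), (1 : ℝ))).differentiableAt)
    rw [this.deriv, (key ((0 : ℝ), (1 : ℝ))).fderiv]
    rfl
  have h2 : pd2 (pd1 v) s t = fderiv ℝ (fderiv ℝ U) (s, t) (0, 1) (1, 0) := by
    have he : (fun y => pd1 v s y) = fun y => fderiv ℝ U (s, y) ((1 : ℝ), (0 : ℝ)) := by
      funext y; exact (hasDerivAt_fst (hdU (s, y))).deriv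
    show deriv (fun y => pd1 v s y) t = _
    rw [he]
    have := hasDerivAt_snd (s := s) (t := t) ((key ((1 : ℝ), (0 : ℝ))).differentiableAt)
    rw [this.deriv, (key ((1 : ℝ), (0 : ℝ))).fderiv]
    rfl
  rw [h1, h2, hsym.eq]

end F0Aux

/-- The function `f₀ = (2 sin 2θ)⁻¹ (sin²θ s² u − ∂_s² u)` satisfies
`(H(θ) − σ) f₀ = −t ∂_s u` on `ℝ²₊`. -/
theorem f0_equation (θ : ℝ) (hθ : θ ∈ Set.Ioo 0 (π/2))
    (u : ℝ → ℝ → ℝ) (σ : ℝ) (hu : IsModelEigen θ u σ)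
    (f₀ : ℝ → ℝ → ℝ)
    (hf₀ : ∀ s t : ℝ, f₀ s t =
      (2 * Real.sin (2*θ))⁻¹ * (Real.sin θ ^ 2 * s^2 * u s t - pd1 (pd1 u) s t)) :
    ∀ s t : ℝ, 0 ≤ t → Hop θ f₀ s t - σ * f₀ s t = - t * pd1 u s t := by
  obtain ⟨hθ0, hθ1⟩ := hθ
  intro s t ht
  have smU : F0Aux.Sm u := contDiff_infty.mpr hu.smooth
  have sm1 := smU.pd1'
  have sm2 := sm1.pd1'
  have sm3 := sm2.pd1'
  have smv := smU.pd2'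
  have smv1 := sm1.pd2'
  have smv2 := sm2.pd2'
  set a := Real.sin θ with ha
  set b := Real.cos θ with hb
  set c := (2 * Real.sin (2 * θ))⁻¹ with hc
  -- the eigenvalue equation, solved for `∂_t² u`
  have heig : ∀ x y : ℝ, 0 ≤ y →
      pd2 (pd2 u) x y = ((y*b - x*a)^2 - σ) * u x y - pd1 (pd1 u) x y := by
    intro x y hy
    have he := hu.eigen x y hy
    simp only [Hop, Vpot] at he
    rw [← ha, ← hb] at he
    linear_combination -he
  -- first s-derivative of f₀
  have e1 : ∀ x y : ℝ, pd1 f₀ x y =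
      c * (a^2 * (2*x*u x y + x^2 * pd1 u x y) - pd1 (pd1 (pd1 u)) x y) := by
    intro x y
    have hfun : (fun x' => f₀ x' y) = fun x' => c * (a^2 * x'^2 * u x' y - pd1 (pd1 u) x' y) :=
      funext fun x' => hf₀ x' y
    have hx2 : HasDerivAt (fun x' : ℝ => a^2 * x'^2) (a^2 * (2*x)) x := by
      simpa using (hasDerivAt_pow 2 x).const_mul (a^2)
    have hD : HasDerivAt (fun x' => c * (a^2 * x'^2 * u x' y - pd1 (pd1 u) x' y))
        (c * ((a^2*(2*x) * u x y + (a^2*x^2) * pd1 u x y) - pd1 (pd1 (pd1 u)) x y)) x :=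
      ((hx2.mul (smU.hd1 x y)).sub (sm2.hd1 x y)).const_mul c
    show deriv (fun x' => f₀ x' y) x = _
    rw [hfun, hD.deriv]; ring
  -- second s-derivative of f₀
  have e2 : pd1 (pd1 f₀) s t =
      c * (a^2 * (2 * u s t + 4*s*pd1 u s t + s^2 * pd1 (pd1 u) s t)
        - pd1 (pd1 (pd1 (pd1 u))) s t) := by
    have hfun : (fun x' => pd1 f₀ x' t) = fun x' =>
        c * (a^2 * (2*x'*u x' t + x'^2 * pd1 u x' t) - pd1 (pd1 (pd1 u)) x' t) :=
      funext fun x' => e1 x' t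
    have h2x : HasDerivAt (fun x' : ℝ => 2*x') (2:ℝ) s := by
      simpa using (hasDerivAt_id s).const_mul (2:ℝ)
    have hx2 : HasDerivAt (fun x' : ℝ => x'^2) (2*s) s := by
      simpa using hasDerivAt_pow 2 s
    have hD : HasDerivAt (fun x' =>
        c * (a^2 * (2*x'*u x' t + x'^2 * pd1 u x' t) - pd1 (pd1 (pd1 u)) x' t))
        (c * (a^2 * ((2 * u s t + 2*s*pd1 u s t) + (2*s * pd1 u s t + s^2 * pd1 (pd1 u) s t))
          - pd1 (pd1 (pd1 (pd1 u))) s t)) s :=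
      ((((h2x.mul (smU.hd1 s t)).add (hx2.mul (sm1.hd1 s t))).const_mul (a^2)).sub
        (sm3.hd1 s t)).const_mul c
    show deriv (fun x' => pd1 f₀ x' t) s = _
    rw [hfun, hD.deriv]; ring
  -- first t-derivative of f₀
  have e3 : ∀ x y : ℝ, pd2 f₀ x y =
      c * (a^2*x^2 * pd2 u x y - pd2 (pd1 (pd1 u)) x y) := by
    intro x y
    have hfun : (fun y' => f₀ x y') = fun y' => c * (a^2 * x^2 * u x y' - pd1 (pd1 u) x y') :=
      funext fun y' => hf₀ x y'
    have hD : HasDerivAt (fun y' => c * (a^2 * x^2 * u x y' - pd1 (pd1 u) x y'))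
        (c * (a^2*x^2 * pd2 u x y - pd2 (pd1 (pd1 u)) x y)) y :=
      (((smU.hd2 x y).const_mul (a^2*x^2)).sub (sm2.hd2 x y)).const_mul c
    show deriv (fun y' => f₀ x y') y = _
    rw [hfun, hD.deriv]
  -- second t-derivative of f₀
  have e4 : pd2 (pd2 f₀) s t =
      c * (a^2*s^2 * pd2 (pd2 u) s t - pd2 (pd2 (pd1 (pd1 u))) s t) := by
    have hfun : (fun y' => pd2 f₀ s y') = fun y' =>
        c * (a^2*s^2 * pd2 u s y' - pd2 (pd1 (pd1 u)) s y') :=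
      funext fun y' => e3 s y'
    have hD : HasDerivAt (fun y' => c * (a^2*s^2 * pd2 u s y' - pd2 (pd1 (pd1 u)) s y'))
        (c * (a^2*s^2 * pd2 (pd2 u) s t - pd2 (pd2 (pd1 (pd1 u))) s t)) t :=
      (((smv.hd2 s t).const_mul (a^2*s^2)).sub (smv2.hd2 s t)).const_mul c
    show deriv (fun y' => pd2 f₀ s y') t = _
    rw [hfun, hD.deriv]
  -- Clairaut: commute the derivatives
  have key : pd2 (pd2 (pd1 (pd1 u))) = pd1 (pd1 (pd2 (pd2 u))) := by
    rw [← sm1.comm, ← smv1.comm, ← smU.comm, ← smv.comm]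
  -- first s-derivative of ∂_t² u via the eigenvalue equation
  have e7 : ∀ x : ℝ, pd1 (pd2 (pd2 u)) x t =
      -(2*a)*((t*b - x*a) * u x t) + ((t*b - x*a)^2 - σ) * pd1 u x t
        - pd1 (pd1 (pd1 u)) x t := by
    intro x
    have hfun : (fun x' => pd2 (pd2 u) x' t)
        = fun x' => ((t*b - x'*a)^2 - σ) * u x' t - pd1 (pd1 u) x' t :=
      funext fun x' => heig x' t ht
    have hV : HasDerivAt (fun x' : ℝ => t*b - x'*a) (-a) x := by
      simpa using ((hasDerivAt_id x).mul_const a).const_sub (t*b)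
    have hV2 : HasDerivAt (fun x' : ℝ => (t*b - x'*a)^2 - σ) (2*(t*b - x*a)*(-a)) x := by
      simpa using (hV.pow 2).sub_const σ
    have hD : HasDerivAt (fun x' => ((t*b - x'*a)^2 - σ) * u x' t - pd1 (pd1 u) x' t)
        ((2*(t*b - x*a)*(-a)) * u x t + ((t*b - x*a)^2 - σ) * pd1 u x t
          - pd1 (pd1 (pd1 u)) x t) x :=
      (hV2.mul (smU.hd1 x t)).sub (sm2.hd1 x t)
    show deriv (fun x' => pd2 (pd2 u) x' t) x = _
    rw [hfun, hD.deriv]; ring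
  -- second s-derivative of ∂_t² u
  have e8 : pd1 (pd1 (pd2 (pd2 u))) s t =
      2*a^2 * u s t - 4*a*(t*b - s*a) * pd1 u s t
        + ((t*b - s*a)^2 - σ) * pd1 (pd1 u) s t - pd1 (pd1 (pd1 (pd1 u))) s t := by
    have hfun : (fun x' => pd1 (pd2 (pd2 u)) x' t) = fun x' =>
        -(2*a)*((t*b - x'*a) * u x' t) + ((t*b - x'*a)^2 - σ) * pd1 u x' t
          - pd1 (pd1 (pd1 u)) x' t :=
      funext fun x' => e7 x'
    have hV : HasDerivAt (fun x' : ℝ => t*b - x'*a) (-a) s := by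
      simpa using ((hasDerivAt_id s).mul_const a).const_sub (t*b)
    have hV2 : HasDerivAt (fun x' : ℝ => (t*b - x'*a)^2 - σ) (2*(t*b - s*a)*(-a)) s := by
      simpa using (hV.pow 2).sub_const σ
    have hD : HasDerivAt (fun x' =>
        -(2*a)*((t*b - x'*a) * u x' t) + ((t*b - x'*a)^2 - σ) * pd1 u x' t
          - pd1 (pd1 (pd1 u)) x' t)
        (-(2*a)*((-a) * u s t + (t*b - s*a) * pd1 u s t)
          + ((2*(t*b - s*a)*(-a)) * pd1 u s t + ((t*b - s*a)^2 - σ) * pd1 (pd1 u) s t)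
          - pd1 (pd1 (pd1 (pd1 u))) s t) s :=
      (((hV.mul (smU.hd1 s t)).const_mul (-(2*a))).add
        (hV2.mul (sm1.hd1 s t))).sub (sm3.hd1 s t)
    show deriv (fun x' => pd1 (pd2 (pd2 u)) x' t) s = _
    rw [hfun, hD.deriv]; ring
  -- algebraic facts
  have hs2 : Real.sin (2*θ) ≠ 0 := by
    have h2θπ : 2*θ < π := by
      have := Real.pi_pos
      linarith
    exact ne_of_gt (Real.sin_pos_of_pos_of_lt_pi (by linarith) h2θπ)
  have hsin : Real.sin (2*θ) = 2*(a*b) := by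
    rw [Real.sin_two_mul, ← ha, ← hb]; ring
  have h1 : c * (4*(a*b)) = 1 := by
    rw [hc, show (4:ℝ)*(a*b) = 2*(2*(a*b)) by ring, ← hsin]
    exact inv_mul_cancel₀ (mul_ne_zero two_ne_zero hs2)
  have hV0 : Vpot θ s t = t*b - s*a := by
    simp only [Vpot]; rw [← ha, ← hb]
  have heq := heig s t ht
  show - pd1 (pd1 f₀) s t - pd2 (pd2 f₀) s t + (Vpot θ s t)^2 * f₀ s t - σ * f₀ s t
      = - t * pd1 u s t
  rw [e2, e4, key, e8, hf₀ s t, hV0, heq]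
  linear_combination (-(t * pd1 u s t)) * h1
end
end

section
/- Let θ ∈ (0, π/2) and let u be a model eigenfunction of H(θ) with eigenvalue σ, and set f₀ := (2 sin(2θ))⁻¹ (sin²θ · s² u − ∂_s² u). Then 4 cos θ · ∫_{ℝ²₊} t ∂_s f₀ · u ds dt = sin θ · ∫_{ℝ²₊} t s u² ds dt. -/
open Real MeasureTheory Set

noncomputable section

/-! ### Auxiliary lemmas -/

/-- Smoothness of the uncurried function, for all orders. -/
def Nice_s8 (v : ℝ → ℝ → ℝ) : Prop := ∀ n : ℕ, ContDiff ℝ n (fun p : ℝ × ℝ => v p.1 p.2)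

lemma Nice_s8.hasDerivAt_fst {v : ℝ → ℝ → ℝ} (hv : Nice_s8 v) (s t : ℝ) :
    HasDerivAt (fun x => v x t) (pd1 v s t) s := by
  have hF : DifferentiableAt ℝ (fun p : ℝ × ℝ => v p.1 p.2) (s, t) :=
    ((hv 1).differentiable (by norm_cast)).differentiableAt
  have hc : HasDerivAt (fun x : ℝ => ((x, t) : ℝ × ℝ)) ((1 : ℝ), (0 : ℝ)) s :=
    (hasDerivAt_id s).prodMk (hasDerivAt_const s t)
  have h := hF.hasFDerivAt.comp_hasDerivAt s hc
  have hdd : DifferentiableAt ℝ (fun x => v x t) s := h.differentiableAt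
  exact hdd.hasDerivAt

lemma pd1_eq_fderiv {v : ℝ → ℝ → ℝ} (hv : Nice_s8 v) (s t : ℝ) :
    pd1 v s t = fderiv ℝ (fun p : ℝ × ℝ => v p.1 p.2) (s, t) ((1 : ℝ), (0 : ℝ)) := by
  have hF : DifferentiableAt ℝ (fun p : ℝ × ℝ => v p.1 p.2) (s, t) :=
    ((hv 1).differentiable (by norm_cast)).differentiableAt
  have hc : HasDerivAt (fun x : ℝ => ((x, t) : ℝ × ℝ)) ((1 : ℝ), (0 : ℝ)) s :=
    (hasDerivAt_id s).prodMk (hasDerivAt_const s t)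
  exact (hF.hasFDerivAt.comp_hasDerivAt s hc).deriv

lemma Nice_s8.pd1_nice {v : ℝ → ℝ → ℝ} (hv : Nice_s8 v) : Nice_s8 (pd1 v) := by
  intro n
  have h2 : ContDiff ℝ n (fun p : ℝ × ℝ =>
      fderiv ℝ (fun q : ℝ × ℝ => v q.1 q.2) p ((1 : ℝ), (0 : ℝ))) := by
    refine ContDiff.clm_apply ?_ contDiff_const
    exact (hv (n+1)).fderiv_right (by exact_mod_cast le_rfl)
  have heq : (fun p : ℝ × ℝ => pd1 v p.1 p.2) = fun p : ℝ × ℝ =>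
      fderiv ℝ (fun q : ℝ × ℝ => v q.1 q.2) p ((1 : ℝ), (0 : ℝ)) :=
    funext fun p => pd1_eq_fderiv hv p.1 p.2
  rw [heq]; exact h2

lemma Nice_s8.continuous2 {v : ℝ → ℝ → ℝ} (hv : Nice_s8 v) :
    Continuous (fun p : ℝ × ℝ => v p.1 p.2) := (hv 0).continuous

/-- core weight bound -/
lemma weight_bound (a : ℕ) (s t : ℝ) (ht : 0 ≤ t) :
    |s| ^ a * (t * (1 + |s| + t) ^ (-((a + 5 : ℕ) : ℝ))) ≤ (1 + s ^ 2)⁻¹ * (1 + t ^ 2)⁻¹ := by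
  have habs : (0:ℝ) ≤ |s| := abs_nonneg s
  set X : ℝ := 1 + |s| + t with hX
  have hX1 : (1:ℝ) ≤ X := by simp only [hX]; linarith
  have hX0 : (0:ℝ) < X := lt_of_lt_of_le one_pos hX1
  have hrw : X ^ (-((a + 5 : ℕ) : ℝ)) = (X ^ (a + 5))⁻¹ := by
    rw [Real.rpow_neg hX0.le, Real.rpow_natCast]
  rw [hrw]
  have h1 : |s| ^ a ≤ X ^ a := pow_le_pow_left₀ habs (by simp only [hX]; linarith) a
  have h2 : t ≤ X := by simp only [hX]; linarith
  have e1 : 1 + s ^ 2 ≤ X ^ 2 := by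
    have : s ^ 2 = |s| ^ 2 := (sq_abs s).symm
    simp only [hX]; nlinarith
  have e2 : 1 + t ^ 2 ≤ X ^ 2 := by simp only [hX]; nlinarith
  have h3 : (1 + s ^ 2) * (1 + t ^ 2) ≤ X ^ 4 := by
    calc (1 + s ^ 2) * (1 + t ^ 2) ≤ X ^ 2 * X ^ 2 :=
          mul_le_mul e1 e2 (by positivity) (by positivity)
      _ = X ^ 4 := by ring
  calc |s| ^ a * (t * (X ^ (a + 5))⁻¹) ≤ X ^ a * (X * (X ^ (a + 5))⁻¹) := by
        gcongr
    _ = (X ^ 4)⁻¹ := by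
        have hne : X ≠ 0 := ne_of_gt hX0
        field_simp
        ring
    _ ≤ ((1 + s ^ 2) * (1 + t ^ 2))⁻¹ := by
        apply inv_anti₀ (by positivity) h3
    _ = (1 + s ^ 2)⁻¹ * (1 + t ^ 2)⁻¹ := by rw [mul_inv]

lemma bound_const_nonneg {v : ℝ → ℝ → ℝ} {C e : ℝ}
    (hv : ∀ s t : ℝ, 0 ≤ t → |v s t| ≤ C * (1 + |s| + t) ^ e) : 0 ≤ C := by
  have h := (abs_nonneg (v 0 0)).trans (hv 0 0 le_rfl)
  simpa using h

/-- bound for a term of shape K * (s^a * (t * (v s t * w s t))) -/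
lemma shape_bound {v w : ℝ → ℝ → ℝ} (a : ℕ) (K Cv Cw : ℝ) (hCw : 0 ≤ Cw)
    (hv : ∀ s t : ℝ, 0 ≤ t → |v s t| ≤ Cv * (1 + |s| + t) ^ (-((a + 5 : ℕ) : ℝ)))
    (hw : ∀ s t : ℝ, 0 ≤ t → |w s t| ≤ Cw) :
    ∀ s t : ℝ, 0 ≤ t → |K * (s ^ a * (t * (v s t * w s t)))| ≤
      (|K| * Cv * Cw) * ((1 + s ^ 2)⁻¹ * (1 + t ^ 2)⁻¹) := by
  intro s t ht
  have hX0 : (0:ℝ) < 1 + |s| + t := by have := abs_nonneg s; linarith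
  have hCv : 0 ≤ Cv := bound_const_nonneg hv
  have hrp : (0:ℝ) ≤ (1 + |s| + t) ^ (-((a + 5 : ℕ) : ℝ)) := Real.rpow_nonneg hX0.le _
  calc |K * (s ^ a * (t * (v s t * w s t)))|
      = |K| * (|s| ^ a * (t * (|v s t| * |w s t|))) := by
        rw [abs_mul, abs_mul, abs_mul, abs_mul, abs_pow, abs_of_nonneg ht]
    _ ≤ |K| * (|s| ^ a * (t * ((Cv * (1 + |s| + t) ^ (-((a + 5 : ℕ) : ℝ))) * Cw))) := by
        have hin : |v s t| * |w s t| ≤ (Cv * (1 + |s| + t) ^ (-((a + 5 : ℕ) : ℝ))) * Cw :=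
          mul_le_mul (hv s t ht) (hw s t ht) (abs_nonneg _) (by positivity)
        have h2 : t * (|v s t| * |w s t|) ≤
            t * ((Cv * (1 + |s| + t) ^ (-((a + 5 : ℕ) : ℝ))) * Cw) :=
          mul_le_mul_of_nonneg_left hin ht
        exact mul_le_mul_of_nonneg_left
          (mul_le_mul_of_nonneg_left h2 (by positivity)) (abs_nonneg K)
    _ = (|K| * Cv * Cw) * (|s| ^ a * (t * (1 + |s| + t) ^ (-((a + 5 : ℕ) : ℝ)))) := by ring
    _ ≤ (|K| * Cv * Cw) * ((1 + s ^ 2)⁻¹ * (1 + t ^ 2)⁻¹) := by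
        apply mul_le_mul_of_nonneg_left (weight_bound a s t ht) (by positivity)

/-- product-measure integrability from the standard bound -/
lemma integrable_of_dom {f : ℝ → ℝ → ℝ} (hc : Continuous (Function.uncurry f)) (C : ℝ)
    (hC : ∀ s t : ℝ, 0 ≤ t → |f s t| ≤ C * ((1 + s ^ 2)⁻¹ * (1 + t ^ 2)⁻¹)) :
    Integrable (Function.uncurry f)
      ((volume : Measure ℝ).prod ((volume : Measure ℝ).restrict (Ioi 0))) := by
  have hdom : Integrable (fun p : ℝ × ℝ => C * ((1 + p.1 ^ 2)⁻¹ * (1 + p.2 ^ 2)⁻¹))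
      ((volume : Measure ℝ).prod ((volume : Measure ℝ).restrict (Ioi 0))) :=
    (Integrable.mul_prod integrable_inv_one_add_sq (Integrable.restrict integrable_inv_one_add_sq)).const_mul C
  refine hdom.mono hc.aestronglyMeasurable ?_
  have hae : ∀ᵐ p : ℝ × ℝ ∂((volume : Measure ℝ).prod ((volume : Measure ℝ).restrict (Ioi 0))),
      0 ≤ p.2 := by
    rw [ae_iff]
    have hset : {p : ℝ × ℝ | ¬ 0 ≤ p.2} = (univ : Set ℝ) ×ˢ (Iio (0:ℝ)) := by
      ext p; simp [not_le]
    rw [hset, Measure.prod_prod]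
    have h0 : (volume : Measure ℝ).restrict (Ioi 0) (Iio 0) = 0 := by
      rw [Measure.restrict_apply measurableSet_Iio]
      simp [Iio_inter_Ioi]
    simp [h0]
  filter_upwards [hae] with p hp
  have h := hC p.1 p.2 hp
  rw [Real.norm_eq_abs, Real.norm_eq_abs, Function.uncurry]
  exact h.trans (le_abs_self _)

/-- integrability of a slice in `t` -/
lemma integrable_slice_t {g : ℝ → ℝ} (hc : Continuous g) {C : ℝ}
    (hC : ∀ t : ℝ, 0 ≤ t → |g t| ≤ C * (1 + t ^ 2)⁻¹) :
    IntegrableOn g (Ioi (0:ℝ)) volume := by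
  refine (integrable_inv_one_add_sq.restrict.const_mul C).mono
    hc.aestronglyMeasurable.restrict ?_
  filter_upwards [ae_restrict_mem measurableSet_Ioi] with t ht
  rw [Real.norm_eq_abs, Real.norm_eq_abs]
  exact (hC t ht.le).trans (le_abs_self _)

/-- integrability on the whole line -/
lemma integrable_line {g : ℝ → ℝ} (hc : Continuous g) {C : ℝ}
    (hC : ∀ s : ℝ, |g s| ≤ C * (1 + s ^ 2)⁻¹) :
    Integrable g (volume : Measure ℝ) := by
  refine (integrable_inv_one_add_sq.const_mul C).mono hc.aestronglyMeasurable ?_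
  refine Filter.Eventually.of_forall fun s => ?_
  rw [Real.norm_eq_abs, Real.norm_eq_abs]
  exact (hC s).trans (le_abs_self _)

lemma tendsto_dom_zero {g : ℝ → ℝ} {C : ℝ} (hC : ∀ s : ℝ, |g s| ≤ C * (1 + s ^ 2)⁻¹)
    {l : Filter ℝ} (hl : Filter.Tendsto (fun s : ℝ => s ^ 2) l Filter.atTop) :
    Filter.Tendsto g l (nhds 0) := by
  have h1 : Filter.Tendsto (fun s : ℝ => 1 + s ^ 2) l Filter.atTop :=
    Filter.tendsto_atTop_add_const_left l 1 hl
  have h2 : Filter.Tendsto (fun s : ℝ => (1 + s ^ 2)⁻¹) l (nhds 0) :=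
    tendsto_inv_atTop_zero.comp h1
  have h3 : Filter.Tendsto (fun s : ℝ => C * (1 + s ^ 2)⁻¹) l (nhds 0) := by
    have := h2.const_mul C
    simpa using this
  exact squeeze_zero_norm (fun s => by rw [Real.norm_eq_abs]; exact hC s) h3

lemma tendsto_sq_atTop : Filter.Tendsto (fun s : ℝ => s ^ 2) Filter.atTop Filter.atTop :=
  Filter.tendsto_pow_atTop (by norm_num)

lemma tendsto_sq_atBot : Filter.Tendsto (fun s : ℝ => s ^ 2) Filter.atBot Filter.atTop := by
  have h := (Filter.tendsto_pow_atTop (n := 2) (by norm_num)).comp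
    (Filter.tendsto_neg_atBot_atTop (G := ℝ))
  have he : ((fun x : ℝ => x ^ 2) ∘ fun x : ℝ => -x) = fun x : ℝ => x ^ 2 := by
    funext x; simp [Function.comp, neg_sq]
  rwa [he] at h


lemma drop_t_factor {C x t : ℝ} (hC : 0 ≤ C) :
    C * ((1 + x ^ 2)⁻¹ * (1 + t ^ 2)⁻¹) ≤ C * (1 + x ^ 2)⁻¹ := by
  have h1 : (1 + t ^ 2)⁻¹ ≤ 1 := by
    rw [inv_le_one₀ (by positivity)]; nlinarith [sq_nonneg t]
  calc C * ((1 + x ^ 2)⁻¹ * (1 + t ^ 2)⁻¹) ≤ C * ((1 + x ^ 2)⁻¹ * 1) := by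
        apply mul_le_mul_of_nonneg_left (mul_le_mul_of_nonneg_left h1 (by positivity)) hC
    _ = C * (1 + x ^ 2)⁻¹ := by ring

set_option maxHeartbeats 1600000 in
/-- Lemma 2.6: `4 cos θ ∫ t ∂_s f₀ · u = sin θ ∫ t s u²`. -/
theorem f0_moment_identity (θ : ℝ) (hθ : θ ∈ Set.Ioo 0 (π/2))
    (u : ℝ → ℝ → ℝ) (σ : ℝ) (hu : IsModelEigen θ u σ)
    (f₀ : ℝ → ℝ → ℝ)
    (hf₀ : ∀ s t : ℝ, f₀ s t =
      (2 * Real.sin (2*θ))⁻¹ * (Real.sin θ ^ 2 * s^2 * u s t - pd1 (pd1 u) s t)) :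
    4 * Real.cos θ * intHalf (fun s t => t * pd1 f₀ s t * u s t) =
      Real.sin θ * intHalf (fun s t => t * s * (u s t)^2) := by
  obtain ⟨hθ0, hθ2⟩ := hθ
  have hsin : 0 < Real.sin θ := Real.sin_pos_of_pos_of_lt_pi hθ0 (by linarith [Real.pi_pos])
  have hcos : 0 < Real.cos θ := Real.cos_pos_of_mem_Ioo ⟨by linarith [Real.pi_pos], hθ2⟩
  have hsinne : Real.sin θ ≠ 0 := ne_of_gt hsin
  have hcosne : Real.cos θ ≠ 0 := ne_of_gt hcos
  have hs2 : Real.sin (2*θ) = 2 * Real.sin θ * Real.cos θ := Real.sin_two_mul θ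
  set c : ℝ := (2 * Real.sin (2*θ))⁻¹ with hcdef
  -- smoothness package
  have N0 : Nice_s8 u := hu.smooth
  have N1 : Nice_s8 (pd1 u) := N0.pd1_nice
  have N2 : Nice_s8 (pd1 (pd1 u)) := N1.pd1_nice
  have N3 : Nice_s8 (pd1 (pd1 (pd1 u))) := N2.pd1_nice
  have D0 := N0.hasDerivAt_fst
  have D1 := N1.hasDerivAt_fst
  have D2 := N2.hasDerivAt_fst
  have c0 := N0.continuous2
  have c1 := N1.continuous2
  have c2 := N2.continuous2
  have c3 := N3.continuous2
  -- the `s`-derivative of `f₀`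
  have hpf : ∀ s t : ℝ, pd1 f₀ s t =
      c * (Real.sin θ ^ 2 * (2*s*u s t + s^2 * pd1 u s t) - pd1 (pd1 (pd1 u)) s t) := by
    intro s t
    have h1 : HasDerivAt (fun x : ℝ => Real.sin θ ^ 2 * x ^ 2) (Real.sin θ ^ 2 * (2*s)) s := by
      simpa using (hasDerivAt_pow 2 s).const_mul (Real.sin θ ^ 2)
    have h2 := ((h1.mul (D0 s t)).sub (D2 s t)).const_mul c
    have heq : (fun x => f₀ x t) =ᶠ[nhds s]
        (fun y => c * (Real.sin θ ^ 2 * y ^ 2 * u y t - pd1 (pd1 u) y t)) :=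
      Filter.Eventually.of_forall fun x => hf₀ x t
    have h4 : HasDerivAt (fun x => f₀ x t)
        (c * (Real.sin θ ^ 2 * (2*s) * u s t + Real.sin θ ^ 2 * s ^ 2 * pd1 u s t
          - pd1 (pd1 (pd1 u)) s t)) s := h2.congr_of_eventuallyEq heq
    show deriv (fun x => f₀ x t) s = _
    rw [h4.deriv]; ring
  -- the antiderivative `G` and its `s`-derivative
  have hGd : ∀ s t : ℝ, HasDerivAt
      (fun x => c * t / 2 * (Real.sin θ ^ 2 * x ^ 2 * (u x t) ^ 2
        - 2 * (pd1 (pd1 u) x t * u x t) + (pd1 u x t) ^ 2))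
      (c * t * (Real.sin θ ^ 2 * (s * (u s t)^2 + s^2 * (u s t * pd1 u s t))
        - pd1 (pd1 (pd1 u)) s t * u s t)) s := by
    intro s t
    have h1 : HasDerivAt (fun x : ℝ => Real.sin θ ^ 2 * x ^ 2) (Real.sin θ ^ 2 * (2*s)) s := by
      simpa using (hasDerivAt_pow 2 s).const_mul (Real.sin θ ^ 2)
    have hp0 := (D0 s t).pow 2
    have part1 := h1.mul hp0
    have part2 := ((D2 s t).mul (D0 s t)).const_mul (2:ℝ)
    have part3 := (D1 s t).pow 2
    have htot := ((part1.sub part2).add part3).const_mul (c * t / 2)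
    refine htot.congr_deriv ?_
    simp only [Pi.pow_apply]
    push_cast
    ring
  -- the pointwise identity
  have hpoint : ∀ s t : ℝ, t * pd1 f₀ s t * u s t =
      Real.sin θ / (4 * Real.cos θ) * (t * s * (u s t)^2) +
      c * t * (Real.sin θ ^ 2 * (s * (u s t)^2 + s^2 * (u s t * pd1 u s t))
        - pd1 (pd1 (pd1 u)) s t * u s t) := by
    intro s t
    rw [hpf s t, hcdef, hs2]
    field_simp
    ring
  -- Schwartz bounds
  have SB0 : ∀ n : ℕ, ∃ C : ℝ, ∀ s t : ℝ, 0 ≤ t →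
      |u s t| ≤ C * (1 + |s| + t) ^ (-(n:ℝ)) := by
    intro n; simpa using hu.schwartz 0 0 n
  have SB1 : ∀ n : ℕ, ∃ C : ℝ, ∀ s t : ℝ, 0 ≤ t →
      |pd1 u s t| ≤ C * (1 + |s| + t) ^ (-(n:ℝ)) := by
    intro n; simpa using hu.schwartz 1 0 n
  have SB2 : ∀ n : ℕ, ∃ C : ℝ, ∀ s t : ℝ, 0 ≤ t →
      |pd1 (pd1 u) s t| ≤ C * (1 + |s| + t) ^ (-(n:ℝ)) := by
    intro n
    have h := hu.schwartz 2 0 n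
    simpa [Function.iterate_succ_apply'] using h
  have SB3 : ∀ n : ℕ, ∃ C : ℝ, ∀ s t : ℝ, 0 ≤ t →
      |pd1 (pd1 (pd1 u)) s t| ≤ C * (1 + |s| + t) ^ (-(n:ℝ)) := by
    intro n
    have h := hu.schwartz 3 0 n
    simpa [Function.iterate_succ_apply'] using h
  -- bounded versions
  have hb0 : ∃ C : ℝ, 0 ≤ C ∧ ∀ s t : ℝ, 0 ≤ t → |u s t| ≤ C := by
    obtain ⟨C, hC⟩ := SB0 0
    refine ⟨max C 0, le_max_right _ _, fun s t ht => ?_⟩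
    have h := hC s t ht
    simp only [Nat.cast_zero, neg_zero, Real.rpow_zero, mul_one] at h
    exact h.trans (le_max_left _ _)
  obtain ⟨Cw0, hCw0nn, hCw0⟩ := hb0
  have hb1 : ∃ C : ℝ, 0 ≤ C ∧ ∀ s t : ℝ, 0 ≤ t → |pd1 u s t| ≤ C := by
    obtain ⟨C, hC⟩ := SB1 0
    refine ⟨max C 0, le_max_right _ _, fun s t ht => ?_⟩
    have h := hC s t ht
    simp only [Nat.cast_zero, neg_zero, Real.rpow_zero, mul_one] at h
    exact h.trans (le_max_left _ _)
  obtain ⟨Cw1, hCw1nn, hCw1⟩ := hb1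
  -- decay versions
  obtain ⟨Cu6, hCu6⟩ := SB0 (1+5)
  obtain ⟨Cu7, hCu7⟩ := SB0 (2+5)
  obtain ⟨Cv7, hCv7⟩ := SB1 (2+5)
  obtain ⟨Cv5, hCv5⟩ := SB1 (0+5)
  obtain ⟨Cx5, hCx5⟩ := SB2 (0+5)
  obtain ⟨Cz5, hCz5⟩ := SB3 (0+5)
  have hCu6nn := bound_const_nonneg hCu6
  have hCu7nn := bound_const_nonneg hCu7
  have hCv7nn := bound_const_nonneg hCv7
  have hCv5nn := bound_const_nonneg hCv5
  have hCx5nn := bound_const_nonneg hCx5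
  have hCz5nn := bound_const_nonneg hCz5
  -- bound on Q
  have hQb : ∀ s t : ℝ, 0 ≤ t → |t * s * (u s t)^2| ≤
      (|(1:ℝ)| * Cu6 * Cw0) * ((1 + s ^ 2)⁻¹ * (1 + t ^ 2)⁻¹) := by
    intro s t ht
    have h := shape_bound 1 1 Cu6 Cw0 hCw0nn hCu6 hCw0 s t ht
    rw [show t * s * (u s t)^2 = 1 * (s ^ 1 * (t * (u s t * u s t))) from by ring]
    exact h
  -- bound on DG
  have hDGb : ∀ s t : ℝ, 0 ≤ t →
      |c * t * (Real.sin θ ^ 2 * (s * (u s t)^2 + s^2 * (u s t * pd1 u s t))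
        - pd1 (pd1 (pd1 u)) s t * u s t)| ≤
      (|c * Real.sin θ ^ 2| * Cu6 * Cw0 + |c * Real.sin θ ^ 2| * Cv7 * Cw0
        + |c| * Cz5 * Cw0) * ((1 + s ^ 2)⁻¹ * (1 + t ^ 2)⁻¹) := by
    intro s t ht
    have h1 := shape_bound 1 (c * Real.sin θ ^ 2) Cu6 Cw0 hCw0nn hCu6 hCw0 s t ht
    have h2 := shape_bound 2 (c * Real.sin θ ^ 2) Cv7 Cw0 hCw0nn hCv7 hCw0 s t ht
    have h3 := shape_bound 0 c Cz5 Cw0 hCw0nn hCz5 hCw0 s t ht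
    set T1 := (c * Real.sin θ ^ 2) * (s ^ 1 * (t * (u s t * u s t))) with hT1
    set T2 := (c * Real.sin θ ^ 2) * (s ^ 2 * (t * (pd1 u s t * u s t))) with hT2
    set T3 := c * (s ^ 0 * (t * (pd1 (pd1 (pd1 u)) s t * u s t))) with hT3
    have e : c * t * (Real.sin θ ^ 2 * (s * (u s t)^2 + s^2 * (u s t * pd1 u s t))
        - pd1 (pd1 (pd1 u)) s t * u s t) = T1 + T2 - T3 := by
      rw [hT1, hT2, hT3]; ring
    rw [e]
    have htri : |T1 + T2 - T3| ≤ |T1| + |T2| + |T3| := by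
      have ha := abs_sub (T1 + T2) T3
      have hb := abs_add_le T1 T2
      linarith
    have := add_le_add (add_le_add h1 h2) h3
    linarith
  -- bound on G
  have hGb : ∀ s t : ℝ, 0 ≤ t →
      |c * t / 2 * (Real.sin θ ^ 2 * s ^ 2 * (u s t) ^ 2
        - 2 * (pd1 (pd1 u) s t * u s t) + (pd1 u s t) ^ 2)| ≤
      (|c * Real.sin θ ^ 2 / 2| * Cu7 * Cw0 + |c| * Cx5 * Cw0
        + |c / 2| * Cv5 * Cw1) * ((1 + s ^ 2)⁻¹ * (1 + t ^ 2)⁻¹) := by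
    intro s t ht
    have h1 := shape_bound 2 (c * Real.sin θ ^ 2 / 2) Cu7 Cw0 hCw0nn hCu7 hCw0 s t ht
    have h2 := shape_bound 0 c Cx5 Cw0 hCw0nn hCx5 hCw0 s t ht
    have h3 := shape_bound 0 (c / 2) Cv5 Cw1 hCw1nn hCv5 hCw1 s t ht
    set S1 := (c * Real.sin θ ^ 2 / 2) * (s ^ 2 * (t * (u s t * u s t))) with hS1
    set S2 := c * (s ^ 0 * (t * (pd1 (pd1 u) s t * u s t))) with hS2
    set S3 := (c / 2) * (s ^ 0 * (t * (pd1 u s t * pd1 u s t))) with hS3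
    have e : c * t / 2 * (Real.sin θ ^ 2 * s ^ 2 * (u s t) ^ 2
        - 2 * (pd1 (pd1 u) s t * u s t) + (pd1 u s t) ^ 2) = S1 - S2 + S3 := by
      rw [hS1, hS2, hS3]; ring
    rw [e]
    have htri : |S1 - S2 + S3| ≤ |S1| + |S2| + |S3| := by
      have ha := abs_add_le (S1 - S2) S3
      have hb := abs_sub S1 S2
      linarith
    have := add_le_add (add_le_add h1 h2) h3
    linarith
  -- continuity (uncurried)
  have contQ : Continuous (Function.uncurry fun s t : ℝ => t * s * (u s t)^2) := by
    show Continuous (fun p : ℝ × ℝ => p.2 * p.1 * (u p.1 p.2)^2)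
    exact (continuous_snd.mul continuous_fst).mul (c0.pow 2)
  have contDG : Continuous (Function.uncurry fun s t : ℝ =>
      c * t * (Real.sin θ ^ 2 * (s * (u s t)^2 + s^2 * (u s t * pd1 u s t))
        - pd1 (pd1 (pd1 u)) s t * u s t)) := by
    show Continuous (fun p : ℝ × ℝ => c * p.2 *
      (Real.sin θ ^ 2 * (p.1 * (u p.1 p.2)^2 + p.1^2 * (u p.1 p.2 * pd1 u p.1 p.2))
        - pd1 (pd1 (pd1 u)) p.1 p.2 * u p.1 p.2))
    exact (continuous_const.mul continuous_snd).mul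
      ((continuous_const.mul ((continuous_fst.mul (c0.pow 2)).add
        ((continuous_fst.pow 2).mul (c0.mul c1)))).sub (c3.mul c0))
  -- product integrability
  have hQint : Integrable (Function.uncurry fun s t : ℝ => t * s * (u s t)^2)
      ((volume : Measure ℝ).prod ((volume : Measure ℝ).restrict (Ioi 0))) :=
    integrable_of_dom contQ _ hQb
  have hDGint : Integrable (Function.uncurry fun s t : ℝ =>
      c * t * (Real.sin θ ^ 2 * (s * (u s t)^2 + s^2 * (u s t * pd1 u s t))
        - pd1 (pd1 (pd1 u)) s t * u s t))
      ((volume : Measure ℝ).prod ((volume : Measure ℝ).restrict (Ioi 0))) :=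
    integrable_of_dom contDG _ hDGb
  -- slice integrability in t
  have IQs : ∀ s : ℝ, IntegrableOn (fun t => t * s * (u s t)^2) (Ioi (0:ℝ)) volume := by
    intro s
    refine integrable_slice_t ?_ (C := (|(1:ℝ)| * Cu6 * Cw0) * (1 + s ^ 2)⁻¹) ?_
    · exact (continuous_id.mul continuous_const).mul
        ((c0.comp (Continuous.prodMk_right s)).pow 2)
    · exact fun t ht => (hQb s t ht).trans (le_of_eq (by ring))
  have IDGs : ∀ s : ℝ, IntegrableOn (fun t =>
      c * t * (Real.sin θ ^ 2 * (s * (u s t)^2 + s^2 * (u s t * pd1 u s t))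
        - pd1 (pd1 (pd1 u)) s t * u s t)) (Ioi (0:ℝ)) volume := by
    intro s
    refine integrable_slice_t ?_
      (C := (|c * Real.sin θ ^ 2| * Cu6 * Cw0 + |c * Real.sin θ ^ 2| * Cv7 * Cw0
        + |c| * Cz5 * Cw0) * (1 + s ^ 2)⁻¹) ?_
    · exact contDG.comp (Continuous.prodMk_right s)
    · exact fun t ht => (hDGb s t ht).trans (le_of_eq (by ring))
  -- the inner integral of DG over s vanishes for t ≥ 0
  have hCDGnn : 0 ≤ |c * Real.sin θ ^ 2| * Cu6 * Cw0 + |c * Real.sin θ ^ 2| * Cv7 * Cw0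
      + |c| * Cz5 * Cw0 := by positivity
  have hCGnn : 0 ≤ |c * Real.sin θ ^ 2 / 2| * Cu7 * Cw0 + |c| * Cx5 * Cw0
      + |c / 2| * Cv5 * Cw1 := by positivity
  have innerzero : ∀ t : ℝ, 0 ≤ t →
      (∫ s : ℝ, c * t * (Real.sin θ ^ 2 * (s * (u s t)^2 + s^2 * (u s t * pd1 u s t))
        - pd1 (pd1 (pd1 u)) s t * u s t)) = 0 := by
    intro t ht
    have hint : Integrable (fun s : ℝ =>
        c * t * (Real.sin θ ^ 2 * (s * (u s t)^2 + s^2 * (u s t * pd1 u s t))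
          - pd1 (pd1 (pd1 u)) s t * u s t)) volume := by
      refine integrable_line ?_
        (C := |c * Real.sin θ ^ 2| * Cu6 * Cw0 + |c * Real.sin θ ^ 2| * Cv7 * Cw0
          + |c| * Cz5 * Cw0) ?_
      · exact contDG.comp (continuous_id.prodMk continuous_const)
      · exact fun s => (hDGb s t ht).trans (drop_t_factor hCDGnn)
    have hGbound : ∀ s : ℝ, |c * t / 2 * (Real.sin θ ^ 2 * s ^ 2 * (u s t) ^ 2
        - 2 * (pd1 (pd1 u) s t * u s t) + (pd1 u s t) ^ 2)| ≤
        (|c * Real.sin θ ^ 2 / 2| * Cu7 * Cw0 + |c| * Cx5 * Cw0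
          + |c / 2| * Cv5 * Cw1) * (1 + s ^ 2)⁻¹ :=
      fun s => (hGb s t ht).trans (drop_t_factor hCGnn)
    have hbot := tendsto_dom_zero hGbound tendsto_sq_atBot
    have htop := tendsto_dom_zero hGbound tendsto_sq_atTop
    have hzero := integral_of_hasDerivAt_of_tendsto (fun x => hGd x t) hint hbot htop
    simpa using hzero
  -- rewrite the integrand
  have hfun : (fun s t => t * pd1 f₀ s t * u s t) = fun s t =>
      Real.sin θ / (4 * Real.cos θ) * (t * s * (u s t)^2) +
      c * t * (Real.sin θ ^ 2 * (s * (u s t)^2 + s^2 * (u s t * pd1 u s t))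
        - pd1 (pd1 (pd1 u)) s t * u s t) :=
    funext fun s => funext fun t => hpoint s t
  -- split the integral
  have hAint : Integrable (fun s : ℝ => ∫ t in Ioi (0:ℝ), t * s * (u s t)^2) volume :=
    hQint.integral_prod_left
  have hBint : Integrable (fun s : ℝ => ∫ t in Ioi (0:ℝ),
      c * t * (Real.sin θ ^ 2 * (s * (u s t)^2 + s^2 * (u s t * pd1 u s t))
        - pd1 (pd1 (pd1 u)) s t * u s t)) volume :=
    hDGint.integral_prod_left
  have hinner : ∀ s : ℝ, (∫ t in Ioi (0:ℝ),
      (Real.sin θ / (4 * Real.cos θ) * (t * s * (u s t)^2) +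
        c * t * (Real.sin θ ^ 2 * (s * (u s t)^2 + s^2 * (u s t * pd1 u s t))
          - pd1 (pd1 (pd1 u)) s t * u s t)))
      = Real.sin θ / (4 * Real.cos θ) * (∫ t in Ioi (0:ℝ), t * s * (u s t)^2)
        + ∫ t in Ioi (0:ℝ), c * t * (Real.sin θ ^ 2 * (s * (u s t)^2
          + s^2 * (u s t * pd1 u s t)) - pd1 (pd1 (pd1 u)) s t * u s t) := by
    intro s
    rw [integral_add ((IQs s).const_mul _) (IDGs s), integral_const_mul]
  have hsplit : intHalf (fun s t =>
      Real.sin θ / (4 * Real.cos θ) * (t * s * (u s t)^2) +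
      c * t * (Real.sin θ ^ 2 * (s * (u s t)^2 + s^2 * (u s t * pd1 u s t))
        - pd1 (pd1 (pd1 u)) s t * u s t))
      = Real.sin θ / (4 * Real.cos θ) * intHalf (fun s t => t * s * (u s t)^2)
        + intHalf (fun s t => c * t * (Real.sin θ ^ 2 * (s * (u s t)^2
          + s^2 * (u s t * pd1 u s t)) - pd1 (pd1 (pd1 u)) s t * u s t)) := by
    simp only [intHalf]
    rw [integral_congr_ae (Filter.Eventually.of_forall hinner),
      integral_add (hAint.const_mul _) hBint, integral_const_mul]
  have hDGzero : intHalf (fun s t => c * t * (Real.sin θ ^ 2 * (s * (u s t)^2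
      + s^2 * (u s t * pd1 u s t)) - pd1 (pd1 (pd1 u)) s t * u s t)) = 0 := by
    simp only [intHalf]
    rw [MeasureTheory.integral_integral_swap hDGint]
    apply integral_eq_zero_of_ae
    filter_upwards [ae_restrict_mem measurableSet_Ioi] with t ht
    exact innerzero t ht.le
  rw [hfun, hsplit, hDGzero]
  field_simp
  ring
end
end
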